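/- arXiv:1101.4415 — 3 statements merged into one kernel-verified Lean document; each statement's English description precedes it below -/
import Mathlib

section
/- (Shirshov's special bracketing) Suppose w and u are associative Lyndon–Shirshov words and u is a subword of w, say w = a u b. Then there exists a bracketing [w]_u of w of the form [a [u c] d] with b = cd, obtained from the standard bracketing of w (in which u begins a bracketed subword [uc]) by rebracketing [uc] as the left-normed product [...[[u][c_1]]...[c_k]] where c = c_1...c_k is the Lyndon factorization of c with c_1 ≤ ... ≤ c_k, such that the deg-lex leading associative monomial of [w]_u equals w. -/
noncomputable section

variable {X : Type*} [LinearOrder X] (k : Type*) [Field k]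

def llt : List X → List X → Prop
  | [], _ => False
  | _ :: _, [] => True
  | a :: u, b :: v => a < b ∨ (a = b ∧ llt u v)

def IsLS (w : List X) : Prop :=
  w ≠ [] ∧ ∀ u v : List X, u ≠ [] → v ≠ [] → w = u ++ v → llt (v ++ u) w

/-- deg-lex order -/
def dlt (u v : List X) : Prop :=
  u.length < v.length ∨ (u.length = v.length ∧ llt u v)

/-- the free associative algebra with basis the free monoid on X -/
abbrev FA (k : Type*) [Field k] (X : Type*) := MonoidAlgebra k (FreeMonoid X)

/-- the generators x ∈ X inside the free associative algebra -/
def gens : Set (FA k X) := Set.range fun x : X => MonoidAlgebra.single (FreeMonoid.of x) (1 : k)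

/-- the leading (deg-lex maximal) monomial of f is w -/
def IsLeading (f : FA k X) (w : List X) : Prop :=
  f.coeff (FreeMonoid.ofList w) ≠ 0 ∧ ∀ v : List X, f.coeff (FreeMonoid.ofList v) ≠ 0 → v = w ∨ dlt v w

/-- underlying associative word of a nonassociative word -/
def mword : FreeMagma X → List X
  | .of x => [x]
  | .mul a b => mword a ++ mword b

/-- evaluation of a nonassociative word in the free associative algebra
via the commutator bracket -/
def evalM : FreeMagma X → FA k X
  | .of x => MonoidAlgebra.single (FreeMonoid.of x) 1
  | .mul a b => evalM a * evalM b - evalM b * evalM a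

/-- nonassociative Lyndon--Shirshov word -/
def IsNLS : FreeMagma X → Prop
  | .of _ => True
  | .mul a b => IsNLS a ∧ IsNLS b ∧ IsLS (mword a ++ mword b) ∧
      (match a with
        | .of _ => True
        | .mul _ a2 => ¬ llt (mword b) (mword a2))

/-- standard bracketing tree: at each node the right factor is the longest
proper Lyndon--Shirshov suffix -/
def IsStd : FreeMagma X → Prop
  | .of _ => True
  | .mul a b => IsStd a ∧ IsStd b ∧ IsLS (mword a ++ mword b) ∧ IsLS (mword b) ∧
      ∀ s : List X, s ≠ [] → s ≠ mword a ++ mword b → s <:+ mword a ++ mword b →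
        IsLS s → s.length ≤ (mword b).length

/-- flattening of a tree of trees -/
def mjoin : FreeMagma (FreeMagma X) → FreeMagma X
  | .of t => t
  | .mul a b => .mul (mjoin a) (mjoin b)

/-- the list of leaves of a binary tree -/
def leaves {α : Type*} : FreeMagma α → List α
  | .of x => [x]
  | .mul a b => leaves a ++ leaves b

/-- `Occurs s t p` : `s` occurs as a subtree of `t` with exactly the word `p`
to its left -/
def Occurs (s : FreeMagma X) : FreeMagma X → List X → Prop
  | .of x, p => s = .of x ∧ p = []
  | .mul l r, p => (s = .mul l r ∧ p = []) ∨ Occurs s l p ∨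
      ∃ q, Occurs s r q ∧ p = mword l ++ q


set_option linter.unusedSectionVars false

section LltLemmas

variable {X : Type*} [LinearOrder X]

lemma prefix_cons₂ {a : X} {u v : List X} (h : u <+: v) : (a :: u) <+: (a :: v) := by
  obtain ⟨k, hk⟩ := h; exact ⟨k, by rw [List.cons_append, hk]⟩

lemma llt_nil (u : List X) : ¬ llt ([] : List X) u := by
  intro h; exact h

lemma llt_of_ne_nil {u : List X} (h : u ≠ []) : llt u [] := by
  cases u with
  | nil => exact absurd rfl h
  | cons a u => exact trivial

lemma llt_cons_iff {a b : X} {u v : List X} :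
    llt (a :: u) (b :: v) ↔ a < b ∨ (a = b ∧ llt u v) := Iff.rfl

lemma llt_irrefl : ∀ u : List X, ¬ llt u u
  | [] => llt_nil []
  | a :: u => by
    rw [llt_cons_iff]
    rintro (h | ⟨-, h⟩)
    · exact lt_irrefl a h
    · exact llt_irrefl u h

lemma llt_trans : ∀ {u v w : List X}, llt u v → llt v w → llt u w
  | [], _, _, h, _ => absurd h (llt_nil _)
  | a :: u, [], _, _, h => absurd h (llt_nil _)
  | a :: u, b :: v, [], _, _ => trivial
  | a :: u, b :: v, c :: w, h1, h2 => by
    rw [llt_cons_iff] at h1 h2 ⊢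
    rcases h1 with h1 | ⟨rfl, h1⟩
    · rcases h2 with h2 | ⟨rfl, h2⟩
      · exact Or.inl (lt_trans h1 h2)
      · exact Or.inl h1
    · rcases h2 with h2 | ⟨rfl, h2⟩
      · exact Or.inl h2
      · exact Or.inr ⟨rfl, llt_trans h1 h2⟩

lemma llt_total : ∀ u v : List X, u ≠ v → llt u v ∨ llt v u
  | [], [], h => absurd rfl h
  | [], b :: v, _ => Or.inr trivial
  | a :: u, [], _ => Or.inl trivial
  | a :: u, b :: v, h => by
    rcases lt_trichotomy a b with hab | rfl | hab
    · exact Or.inl (Or.inl hab)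
    · have : u ≠ v := fun he => h (by rw [he])
      rcases llt_total u v this with h' | h'
      · exact Or.inl (Or.inr ⟨rfl, h'⟩)
      · exact Or.inr (Or.inr ⟨rfl, h'⟩)
    · exact Or.inr (Or.inl hab)

/-- an extension is smaller than the original word -/
lemma llt_append_right : ∀ (u x : List X), x ≠ [] → llt (u ++ x) u
  | [], x, hx => llt_of_ne_nil (by simpa using hx)
  | a :: u, x, hx => Or.inr ⟨rfl, llt_append_right u x hx⟩

lemma not_llt_append_self : ∀ (u x : List X), ¬ llt u (u ++ x)
  | [], x => llt_nil _
  | a :: u, x => by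
    rw [List.cons_append, llt_cons_iff]
    rintro (h | ⟨-, h⟩)
    · exact lt_irrefl a h
    · exact not_llt_append_self u x h

/-- L2 : cancel a common prefix -/
lemma llt_append_left_iff : ∀ (u x y : List X), llt (u ++ x) (u ++ y) ↔ llt x y
  | [], x, y => Iff.rfl
  | a :: u, x, y => by
    rw [List.cons_append, List.cons_append, llt_cons_iff]
    simp only [lt_irrefl a, false_or, true_and, llt_append_left_iff u x y]

/-- L1 : same-length strict comparison propagates to appends -/
lemma llt_append_of_length_eq : ∀ {u v : List X}, llt u v → u.length = v.length →
    ∀ (x y : List X), llt (u ++ x) (v ++ y)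
  | [], v, h, _, _, _ => absurd h (llt_nil _)
  | a :: u, [], _, hl, _, _ => by simp at hl
  | a :: u, b :: v, h, hl, x, y => by
    rcases h with h | ⟨rfl, h⟩
    · exact Or.inl h
    · exact Or.inr ⟨rfl, llt_append_of_length_eq h (by simpa using hl) x y⟩

/-- K1 : a comparison against `s ++ y` either sees `s` as a prefix of the smaller
word, or is decided inside `s`. -/
lemma llt_append_cases_right : ∀ (s : List X) {t y : List X}, llt t (s ++ y) →
    s <+: t ∨ ∀ y' : List X, llt t (s ++ y')
  | [], t, y, _ => Or.inl (List.nil_prefix)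
  | a :: s, [], y, h => absurd h (llt_nil _)
  | a :: s, b :: t, y, h => by
    rcases h with h | ⟨rfl, h⟩
    · exact Or.inr fun y' => Or.inl h
    · rcases llt_append_cases_right s h with h' | h'
      · exact Or.inl (prefix_cons₂ h')
      · exact Or.inr fun y' => Or.inr ⟨rfl, h' y'⟩

/-- K2 -/
lemma llt_append_cases_left : ∀ (s : List X) {t x : List X}, llt (s ++ x) t →
    s <+: t ∨ ∀ x' : List X, llt (s ++ x') t
  | [], t, x, _ => Or.inl (List.nil_prefix)
  | a :: s, [], x, _ => Or.inr fun x' => trivial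
  | a :: s, b :: t, x, h => by
    rcases h with h | ⟨rfl, h⟩
    · exact Or.inr fun x' => Or.inl h
    · rcases llt_append_cases_left s h with h' | h'
      · exact Or.inl (prefix_cons₂ h')
      · exact Or.inr fun x' => Or.inr ⟨rfl, h' x'⟩

/-- K6 : prefix-incomparable words compare independently of what is appended -/
lemma llt_append_of_incomp : ∀ {s t : List X}, ¬ s <+: t → ¬ t <+: s →
    ∀ {x y : List X}, llt (s ++ x) (t ++ y) → ∀ (x' y' : List X), llt (s ++ x') (t ++ y')
  | [], t, hs, _, _, _, _ => absurd (List.nil_prefix) hs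
  | a :: s, [], _, ht, _, _, _ => absurd (List.nil_prefix) ht
  | a :: s, b :: t, hs, ht, x, y, h => by
    rcases h with h | ⟨rfl, h⟩
    · exact fun x' y' => Or.inl h
    · have hs' : ¬ s <+: t := fun hp => hs (prefix_cons₂ hp)
      have ht' : ¬ t <+: s := fun hp => ht (prefix_cons₂ hp)
      exact fun x' y' => Or.inr ⟨rfl, llt_append_of_incomp hs' ht' h x' y'⟩

/-- strongly less : less no matter what is appended on either side -/
def Sllt (s t : List X) : Prop := ∀ x y : List X, llt (s ++ x) (t ++ y)

lemma sllt_of_llt {s t : List X} (h : llt s t) (hs : ¬ s <+: t) (ht : ¬ t <+: s) :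
    Sllt s t := by
  intro x y
  have h' : llt (s ++ []) (t ++ []) := by simpa using h
  exact llt_append_of_incomp hs ht h' x y

lemma sllt_llt {s t : List X} (h : Sllt s t) : llt s t := by
  have := h [] []; simpa using this

lemma sllt_trans {s t r : List X} (h1 : Sllt s t) (h2 : Sllt t r) : Sllt s r := by
  intro x y
  have a1 : llt (s ++ x) (t ++ []) := h1 x []
  have a2 : llt (t ++ []) (r ++ y) := h2 [] y
  exact llt_trans a1 a2

end LltLemmas
section IsLSLemmas

variable {X : Type*} [LinearOrder X]

lemma IsLS.ne_nil {w : List X} (h : IsLS w) : w ≠ [] := h.1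

lemma isLS_singleton (x : X) : IsLS [x] := by
  refine ⟨by simp, fun u v hu hv huv => ?_⟩
  rcases u with - | ⟨a, u⟩
  · exact absurd rfl hu
  · rcases v with - | ⟨b, v⟩
    · exact absurd rfl hv
    · have hl := congrArg List.length huv
      simp [List.length_append] at hl

/-- a proper nonempty suffix of an LS word is not a prefix (LS words are unbordered) -/
lemma IsLS.not_border {w s : List X} (hw : IsLS w) (hs : s <:+ w) (hsw : s ≠ w)
    (hsn : s ≠ []) (hp : s <+: w) : False := by
  obtain ⟨p, hpw⟩ := hs
  obtain ⟨t, htw⟩ := hp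
  have hpn : p ≠ [] := by
    rintro rfl; exact hsw (by simpa using hpw)
  have htn : t ≠ [] := by
    rintro rfl; exact hsw (by simpa using htw)
  have h1 : llt (s ++ p) w := hw.2 p s hpn hsn hpw.symm
  have h2 : llt (t ++ s) w := hw.2 s t hsn htn htw.symm
  rw [← htw, llt_append_left_iff] at h1
  have hlen : p.length = t.length := by
    have := congrArg List.length hpw
    have := congrArg List.length htw
    simp at *; omega
  have h3 : llt (p ++ s) (t ++ s) := llt_append_of_length_eq h1 hlen s s
  rw [hpw] at h3
  exact llt_irrefl w (llt_trans h3 h2)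

lemma IsLS.suffix_llt {w s : List X} (hw : IsLS w) (hs : s <:+ w) (hsw : s ≠ w)
    (hsn : s ≠ []) : llt s w := by
  obtain ⟨p, hpw⟩ := hs
  have hpn : p ≠ [] := by rintro rfl; exact hsw (by simpa using hpw)
  have h1 : llt (s ++ p) w := hw.2 p s hpn hsn hpw.symm
  rcases llt_append_cases_left s h1 with h | h
  · exact absurd h (hw.not_border ⟨p, hpw⟩ hsw hsn)
  · simpa using h []

lemma IsLS.suffix_sllt {w s : List X} (hw : IsLS w) (hs : s <:+ w) (hsw : s ≠ w)
    (hsn : s ≠ []) : Sllt s w := by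
  refine sllt_of_llt (hw.suffix_llt hs hsw hsn) (fun hp => hw.not_border hs hsw hsn hp)
    (fun hp => ?_)
  have := hp.length_le
  have := hs.length_le
  have : w = s := List.IsPrefix.eq_of_length hp (by omega)
  exact hsw this.symm

/-- the suffix criterion for LS words -/
lemma isLS_of_suffix_llt {w : List X} (hw : w ≠ [])
    (h : ∀ s, s <:+ w → s ≠ w → s ≠ [] → llt s w) : IsLS w := by
  refine ⟨hw, fun u v hu hv huv => ?_⟩
  have hsv : v <:+ w := ⟨u, huv.symm⟩
  have hvw : v ≠ w := by
    rintro rfl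
    exact hu (by simpa using huv)
  have h1 : llt v w := h v hsv hvw hv
  have hnp : ¬ v <+: w := by
    rintro ⟨t, ht⟩
    have htn : t ≠ [] := by
      rintro rfl
      exact hvw (by simpa using ht)
    rw [← ht] at h1
    exact not_llt_append_self v t h1
  have hnp2 : ¬ w <+: v := by
    intro hp
    have := hp.length_le
    have := hsv.length_le
    exact hvw ((List.IsPrefix.eq_of_length hp (by omega)).symm)
  have := sllt_of_llt h1 hnp hnp2 u []
  simpa [huv] using this

end IsLSLemmas
section Combinatorics

variable {X : Type*} [LinearOrder X]

lemma suffix_append_split {t x y : List X} (h : t <:+ x ++ y) :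
    t <:+ y ∨ ∃ x', x' <:+ x ∧ x' ≠ [] ∧ t = x' ++ y := by
  obtain ⟨p, hp⟩ := h
  by_cases hl : x.length ≤ p.length
  · left
    have hx : x <+: p :=
      List.prefix_of_prefix_length_le ⟨y, rfl⟩ ⟨t, hp⟩ hl
    obtain ⟨p', rfl⟩ := hx
    rw [List.append_assoc] at hp
    exact ⟨p', List.append_cancel_left hp⟩
  · right
    have hx : p <+: x :=
      List.prefix_of_prefix_length_le ⟨t, hp⟩ ⟨y, rfl⟩ (by omega)
    obtain ⟨x', rfl⟩ := hx
    rw [List.append_assoc] at hp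
    refine ⟨x', ⟨p, rfl⟩, ?_, List.append_cancel_left hp⟩
    rintro rfl
    simp at hl
  
/-- composition: if `u`, `v` are LS and `v < u` then `uv` is LS -/
lemma isLS_append {u v : List X} (hu : IsLS u) (hv : IsLS v) (h : llt v u) :
    IsLS (u ++ v) := by
  refine isLS_of_suffix_llt (by simp [hu.ne_nil]) (fun t ht htn htne => ?_)
  rcases suffix_append_split ht with ht | ⟨u', hu', hu'n, rfl⟩
  -- t is a suffix of v
  · by_cases huv : u <+: v
    · -- v = u ++ k
      obtain ⟨k, hk⟩ := huv
      have hkn : k ≠ [] := by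
        rintro rfl
        rw [List.append_nil] at hk
        rw [← hk] at h
        exact llt_irrefl u h
      by_cases htv : t = v
      · -- goal : llt v (u ++ v)
        rw [htv]
        have hkne : k ≠ v := by
          rintro rfl
          have := congrArg List.length hk
          simp at this
          exact hu.ne_nil this
        have hsk : Sllt k v := hv.suffix_sllt ⟨u, hk⟩ hkne hkn
        have h2 := hsk [] []
        simp only [List.append_nil] at h2
        nth_rewrite 1 [← hk]
        rw [llt_append_left_iff]
        exact h2
      · -- t proper suffix of v
        have h1 : llt t v := hv.suffix_llt ht htv htne
        rw [← hk] at h1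
        rcases llt_append_cases_right u h1 with hp | hp
        · obtain ⟨t₂, rfl⟩ := hp
          have ht₂n : t₂ ≠ [] := by
            rintro rfl
            rw [List.append_nil] at ht htv
            exact hv.not_border ht htv hu.ne_nil ⟨k, hk⟩
          have ht₂v : t₂ <:+ v := (List.suffix_append u t₂).trans ht
          have ht₂ne : t₂ ≠ v := by
            intro he
            have hl := ht.length_le
            rw [he, List.length_append] at hl
            exact hu.ne_nil (List.length_eq_zero_iff.1 (by omega))
          rw [llt_append_left_iff]
          exact hv.suffix_llt ht₂v ht₂ne ht₂n
        · exact hp v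
    · -- ¬ u <+: v : v strongly less than u
      have hvu : ¬ v <+: u := by
        rintro ⟨k, hk⟩
        have hkn : k ≠ [] := by
          rintro rfl; rw [List.append_nil] at hk; rw [← hk] at h; exact llt_irrefl v h
        rw [← hk] at h
        exact not_llt_append_self v k h
      have hsvu : Sllt v u := sllt_of_llt h hvu huv
      by_cases htv : t = v
      · rw [htv]
        have := hsvu [] v
        simpa using this
      · have := sllt_trans (hv.suffix_sllt ht htv htne) hsvu [] v
        simpa using this
  -- t = u' ++ v with u' nonempty suffix of u
  · have hu'ne : u' ≠ u := by
      rintro rfl; exact htn rfl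
    exact hu.suffix_sllt hu' hu'ne hu'n v v

/-- the straddle lemma : if `u = u₁u₂` is LS, `w₂` is LS and `u₂` is a prefix
of `w₂`, then `u₁w₂` is LS -/
lemma isLS_straddle {u u₁ u₂ w₂ : List X} (hu : IsLS u) (hw₂ : IsLS w₂)
    (hsplit : u = u₁ ++ u₂) (h₁ : u₁ ≠ []) (h₂ : u₂ ≠ []) (hpre : u₂ <+: w₂) :
    IsLS (u₁ ++ w₂) := by
  obtain ⟨r, hr⟩ := hpre
  have heq : u₁ ++ w₂ = u ++ r := by
    rw [hsplit, ← hr, List.append_assoc]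
  rw [heq]
  have hw₂u : Sllt w₂ u := by
    intro x y
    have hs : Sllt u₂ u := hu.suffix_sllt ⟨u₁, hsplit.symm⟩
      (by rintro rfl; simp at hsplit; exact h₁ hsplit) h₂
    have := hs (r ++ x) y
    rwa [← List.append_assoc, hr] at this
  refine isLS_of_suffix_llt (by simp [hu.ne_nil]) (fun t ht htn htne => ?_)
  rcases suffix_append_split ht with ht | ⟨u', hu', hu'n, rfl⟩
  · -- t suffix of r
    have hrw : r <:+ w₂ := ⟨u₂, hr⟩
    have hrne : r ≠ w₂ := by
      rintro rfl
      conv at hr => rw [← List.nil_append r]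
      exact h₂ (List.append_cancel_right hr)
    have htw₂ : t ≠ w₂ := by
      intro he
      have h1 := ht.length_le
      rw [he] at h1
      have h2 := hrw.length_le
      exact hrne (List.IsSuffix.eq_of_length hrw (by omega))
    have h1 : Sllt t u := sllt_trans (hw₂.suffix_sllt (ht.trans hrw) htw₂ htne) hw₂u
    have := h1 [] r
    simpa using this
  · -- t = u' ++ r with u' nonempty suffix of u
    have hu'ne : u' ≠ u := by
      rintro rfl
      exact htn rfl
    exact hu.suffix_sllt hu' hu'ne hu'n r r

end Combinatorics
section LongestPrefix

variable {X : Type*} [LinearOrder X]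

lemma exists_longest_LS_prefix (b : List X) (hb : b ≠ []) :
    ∃ c, c <+: b ∧ c ≠ [] ∧ IsLS c ∧
      ∀ p, p <+: b → p ≠ [] → IsLS p → p.length ≤ c.length := by
  classical
  set P : ℕ → Prop := fun j => 1 ≤ j ∧ IsLS (b.take j) with hP
  have hP1 : P 1 := by
    refine ⟨le_refl 1, ?_⟩
    rcases b with - | ⟨x, b'⟩
    · exact absurd rfl hb
    · simpa using isLS_singleton x
  have hb1 : 1 ≤ b.length := by
    rcases b with - | ⟨x, b'⟩
    · exact absurd rfl hb
    · simp
  set j₀ := Nat.findGreatest P b.length with hj₀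
  have hPj₀ : P j₀ := Nat.findGreatest_spec hb1 hP1
  have hj₀le : j₀ ≤ b.length := Nat.findGreatest_le b.length
  have hlen : (b.take j₀).length = j₀ := by
    rw [List.length_take]; omega
  refine ⟨b.take j₀, List.take_prefix _ _, ?_, hPj₀.2, ?_⟩
  · intro h
    have := congrArg List.length h
    rw [hlen] at this
    simp at this
    omega
  · intro p hp hpn hpLS
    have hple : p.length ≤ b.length := hp.length_le
    have htake : b.take p.length = p := (List.prefix_iff_eq_take.1 hp).symm
    have hPp : P p.length := by
      refine ⟨?_, by rwa [htake]⟩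
      rcases p with - | ⟨x, p'⟩
      · exact absurd rfl hpn
      · simp
    have := Nat.le_findGreatest hple hPp
    omega

/-- E0 : the longest LS prefix of `b` is not a prefix of `m` when `w = m ++ b` is LS -/
lemma longest_prefix_not_prefix : ∀ n : ℕ, ∀ w m b c : List X, b.length ≤ n →
    IsLS w → w = m ++ b → m ≠ [] → b ≠ [] → c <+: b → c ≠ [] → IsLS c →
    (∀ p, p <+: b → p ≠ [] → IsLS p → p.length ≤ c.length) → ¬ c <+: m := by
  intro n
  induction n with
  | zero =>
    intro w m b c hn _ _ _ hb _ hcn _ _ _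
    exact hb (List.length_eq_zero_iff.1 (by omega))
  | succ n IH =>
    intro w m b c hn hw hwmb hm hb hcb hcn hcLS hcmax hcm
    obtain ⟨s', hs'⟩ := hcb
    by_cases hs'n : s' = []
    · -- b = c, so b is a prefix of m hence of w, and a proper suffix : border
      subst hs'n
      rw [List.append_nil] at hs'
      subst hs'
      have hbw : c <+: w := hcm.trans ⟨c, hwmb.symm⟩
      have hbsuf : c <:+ w := ⟨m, hwmb.symm⟩
      have hbne : c ≠ w := by
        intro he
        have := congrArg List.length hwmb
        rw [← he, List.length_append] at this
        have : m.length = 0 := by omega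
        exact hm (List.length_eq_zero_iff.1 this)
      exact hw.not_border hbsuf hbne hcn hbw
    · obtain ⟨c₂, hc₂p, hc₂n, hc₂LS, hc₂max⟩ := exists_longest_LS_prefix s' hs'n
      have hIH : ¬ c₂ <+: (m ++ c) := by
        refine IH w (m ++ c) s' c₂ ?_ hw ?_ (by simp [hm]) hs'n hc₂p hc₂n hc₂LS hc₂max
        · have := congrArg List.length hs'
          rw [List.length_append] at this
          have : 1 ≤ c.length := by
            rcases c with - | ⟨x, c'⟩
            · exact absurd rfl hcn
            · simp
          omega
        · rw [hwmb, ← hs', List.append_assoc]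
      -- c ++ c₂ is a prefix of b longer than c, so it is not LS
      have hnotLS : ¬ IsLS (c ++ c₂) := by
        intro hLS
        have hpre : c ++ c₂ <+: b := by
          rw [← hs']
          obtain ⟨s'', hs''⟩ := hc₂p
          exact ⟨s'', by rw [List.append_assoc, hs'']⟩
        have := hcmax (c ++ c₂) hpre (by simp [hcn]) hLS
        rw [List.length_append] at this
        have : c₂.length = 0 := by omega
        exact hc₂n (List.length_eq_zero_iff.1 this)
      have hncc : ¬ llt c₂ c := fun h => hnotLS (isLS_append hcLS hc₂LS h)
      rcases eq_or_ne c c₂ with heq | hne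
      · exact hIH (heq ▸ (hcm.trans ⟨c, rfl⟩))
      · rcases llt_total c c₂ hne with hlt | hlt
        · by_cases hc₂c : c₂ <+: c
          · exact hIH (hc₂c.trans (hcm.trans ⟨c, rfl⟩))
          · have hcc₂ : ¬ c <+: c₂ := by
              rintro ⟨k, hk⟩
              rcases eq_or_ne k [] with rfl | hkn
              · rw [List.append_nil] at hk
                exact hne hk
              · rw [← hk] at hlt
                exact not_llt_append_self c k hlt
            have hS : Sllt c c₂ := sllt_of_llt hlt hcc₂ hc₂c
            -- s' is a proper nonempty suffix of w
            have hs'w : s' <:+ w := List.IsSuffix.trans ⟨c, hs'⟩ ⟨m, hwmb.symm⟩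
            have hs'ne : s' ≠ w := by
              intro he
              have h1 := congrArg List.length hwmb
              have h2 := congrArg List.length hs'
              rw [List.length_append] at h1 h2
              have : 1 ≤ m.length := by
                rcases m with - | ⟨x, m'⟩
                · exact absurd rfl hm
                · simp
              have : 1 ≤ c.length := by
                rcases c with - | ⟨x, c'⟩
                · exact absurd rfl hcn
                · simp
              rw [← he] at h1
              omega
            have hSs'w : Sllt s' w := hw.suffix_sllt hs'w hs'ne hs'n
            obtain ⟨g, hg⟩ := hcm
            obtain ⟨s'', hs''⟩ := hc₂p
            have h1 : llt (c₂ ++ s'') (c ++ (g ++ b)) := by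
              have := hSs'w [] []
              rw [List.append_nil, List.append_nil, hwmb, ← hg, List.append_assoc,
                ← hs''] at this
              exact this
            have h2 : llt (c ++ (g ++ b)) (c₂ ++ s'') := hS (g ++ b) s''
            exact llt_irrefl _ (llt_trans h1 h2)
        · exact hncc hlt

/-- E : key inequality for the left-normed bracketing -/
lemma longest_prefix_llt {w m b c : List X}
    (hw : IsLS w) (hwmb : w = m ++ b) (hm : m ≠ []) (hb : b ≠ [])
    (hcb : c <+: b) (hcn : c ≠ []) (hcLS : IsLS c)
    (hcmax : ∀ p, p <+: b → p ≠ [] → IsLS p → p.length ≤ c.length) :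
    llt (c ++ m) (m ++ c) := by
  have hE0 : ¬ c <+: m :=
    longest_prefix_not_prefix b.length w m b c (le_refl _) hw hwmb hm hb hcb hcn hcLS hcmax
  by_cases hmc : m <+: c
  · obtain ⟨e, he⟩ := hmc
    have hen : e ≠ [] := by
      rintro rfl
      rw [List.append_nil] at he
      exact hE0 (he ▸ List.prefix_refl m)
    have hgoal : llt (e ++ m) (m ++ e) := by
      have := hcLS.2 m e hm hen he.symm
      rwa [← he] at this
    rw [← he, List.append_assoc, llt_append_left_iff]
    exact hgoal
  · have h1 : llt b w := by
      refine hw.suffix_llt ⟨m, hwmb.symm⟩ ?_ hb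
      intro he
      have := congrArg List.length hwmb
      rw [← he, List.length_append] at this
      have : m.length = 0 := by omega
      exact hm (List.length_eq_zero_iff.1 this)
    obtain ⟨s', hs'⟩ := hcb
    rw [hwmb, ← hs'] at h1
    exact llt_append_of_incomp hE0 hmc h1 m c

end LongestPrefix
section StdSplit

variable {X : Type*} [LinearOrder X]

/-- A2 : the left factor of the standard factorization is LS -/
lemma take_isLS {w : List X} (hw : IsLS w) (i : ℕ) (hi1 : 1 ≤ i) (hi2 : i < w.length)
    (hbLS : IsLS (w.drop i))
    (hmax : ∀ s, s <:+ w → s ≠ w → s ≠ [] → IsLS s → s.length ≤ w.length - i) :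
    IsLS (w.take i) := by
  set a := w.take i with ha
  set b := w.drop i with hb
  have hw_ab : w = a ++ b := (List.take_append_drop i w).symm
  have halen : a.length = i := by rw [ha, List.length_take]; omega
  have hblen : b.length = w.length - i := by rw [hb, List.length_drop]
  have han : a ≠ [] := by
    intro h; rw [h] at halen; simp at halen; omega
  have hbn : b ≠ [] := hbLS.ne_nil
  have key : ∀ n : ℕ, ∀ s : List X, s.length ≤ n → s <:+ a → s ≠ a → s ≠ [] → llt s a := by
    intro n
    induction n with
    | zero =>
      intro s hn _ _ hsn
      exact absurd (List.length_eq_zero_iff.1 (by omega)) hsn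
    | succ n IH =>
      intro s hn hssuf hsa hsn
      have hsblen : s.length < a.length := by
        obtain ⟨p, hp⟩ := hssuf
        have := congrArg List.length hp
        rw [List.length_append] at this
        have hpn : p ≠ [] := by rintro rfl; exact hsa (by simpa using hp)
        have : 1 ≤ p.length := by
          rcases p with - | ⟨x, p'⟩
          · exact absurd rfl hpn
          · simp
        omega
      have hsbw : s ++ b <:+ w := by
        rw [hw_ab]
        obtain ⟨p, hp⟩ := hssuf
        exact ⟨p, by rw [← List.append_assoc, hp]⟩
      have hsbne : s ++ b ≠ w := by
        intro he
        have := congrArg List.length he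
        rw [List.length_append, hw_ab, List.length_append] at this
        omega
      have hsbnn : s ++ b ≠ [] := by simp [hsn]
      by_cases hpre : s <+: a
      · -- s is a prefix and suffix of a : show s ++ b is LS, contradict maximality
        exfalso
        obtain ⟨r, hr⟩ := hpre
        have hsbLS : IsLS (s ++ b) := by
          refine isLS_of_suffix_llt hsbnn (fun t ht htn htne => ?_)
          rcases suffix_append_split ht with ht | ⟨s₁, hs₁, hs₁n, rfl⟩
          · -- t is a suffix of b
            have htw : t <:+ w := ht.trans (List.drop_suffix i w)
            have htwne : t ≠ w := by
              intro he
              have h1 := ht.length_le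
              rw [he] at h1
              have := congrArg List.length hw_ab
              rw [List.length_append] at this
              omega
            have h1 : llt t w := hw.suffix_llt htw htwne htne
            have h1' : llt t (s ++ (r ++ b)) := by
              rwa [← List.append_assoc, hr, ← hw_ab]
            rcases llt_append_cases_right s h1' with hp | hp
            · obtain ⟨t₂, rfl⟩ := hp
              rcases eq_or_ne t₂ [] with rfl | ht₂n
              · rw [List.append_nil] at ht htne ⊢
                exact absurd ((hw.not_border (ht.trans (List.drop_suffix i w))
                  (by intro he
                      have h1 := ht.length_le
                      rw [he] at h1
                      have := congrArg List.length hw_ab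
                      rw [List.length_append] at this
                      omega) htne)
                  (List.IsPrefix.trans ⟨r, hr⟩ (List.take_prefix i w))) id
              · rw [llt_append_left_iff]
                have ht₂b : t₂ <:+ b := (List.suffix_append s t₂).trans ht
                have ht₂ne : t₂ ≠ b := by
                  intro he
                  have h1 := ht.length_le
                  rw [he, List.length_append] at h1
                  have : s.length = 0 := by omega
                  exact hsn (List.length_eq_zero_iff.1 this)
                exact hbLS.suffix_llt ht₂b ht₂ne ht₂n
            · exact hp b
          · -- t = s₁ ++ b with s₁ a proper nonempty suffix of s
            have hs₁s : s₁ ≠ s := by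
              rintro rfl; exact htn rfl
            have hs₁lt : s₁.length < s.length := by
              obtain ⟨p, hp⟩ := hs₁
              have := congrArg List.length hp
              rw [List.length_append] at this
              have hpn : p ≠ [] := by rintro rfl; exact hs₁s (by simpa using hp)
              have : 1 ≤ p.length := by
                rcases p with - | ⟨x, p'⟩
                · exact absurd rfl hpn
                · simp
              omega
            by_cases hs₁pre : s₁ <+: s
            · -- by IH, llt s₁ a, contradicting s₁ prefix of a
              exfalso
              have hs₁a : s₁ <:+ a := hs₁.trans hssuf
              have hs₁an : s₁ ≠ a := by
                intro he
                rw [he] at hs₁lt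
                omega
              have hlt := IH s₁ (by omega) hs₁a hs₁an hs₁n
              have hs₁prea : s₁ <+: a := hs₁pre.trans ⟨r, hr⟩
              obtain ⟨k, hk⟩ := hs₁prea
              have hkn : k ≠ [] := by
                rintro rfl
                rw [List.append_nil] at hk
                exact hs₁an hk
              rw [← hk] at hlt
              exact not_llt_append_self s₁ k hlt
            · have h1 : llt (s₁ ++ b) w := by
                refine hw.suffix_llt (by
                  rw [hw_ab]
                  obtain ⟨p, hp⟩ := hs₁.trans hssuf
                  exact ⟨p, by rw [← List.append_assoc, hp]⟩) ?_ (by simp [hs₁n])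
                intro he
                have := congrArg List.length he
                rw [List.length_append, hw_ab, List.length_append] at this
                omega
              have h1' : llt (s₁ ++ b) (s ++ (r ++ b)) := by
                rwa [← List.append_assoc, hr, ← hw_ab]
              rcases llt_append_cases_right s h1' with hp | hp
              · exfalso
                exact hs₁pre (List.prefix_of_prefix_length_le (List.prefix_append s₁ b)
                  hp (by omega))
              · exact hp b
        have := hmax (s ++ b) hsbw hsbne hsbnn hsbLS
        rw [List.length_append] at this
        have hs1 : 1 ≤ s.length := by
          rcases s with - | ⟨x, s'⟩
          · exact absurd rfl hsn
          · simp
        omega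
      · -- comparison decided inside s
        have h1 : llt (s ++ b) w := hw.suffix_llt hsbw hsbne hsbnn
        rw [hw_ab] at h1
        rcases llt_append_cases_right a h1 with hp | hp
        · exact absurd (List.prefix_of_prefix_length_le (List.prefix_append s b) hp
            (by omega)) hpre
        · have h2 := hp []
          rw [List.append_nil] at h2
          rcases llt_append_cases_left s h2 with hp2 | hp2
          · exact absurd hp2 hpre
          · have := hp2 []
            rwa [List.append_nil] at this
  exact isLS_of_suffix_llt han (fun s hs hsa hsn => key s.length s (le_refl _) hs hsa hsn)

/-- existence of the standard split of an LS word of length ≥ 2 -/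
lemma exists_std_split (w : List X) (hw : IsLS w) (h2 : 2 ≤ w.length) :
    ∃ i, 1 ≤ i ∧ i < w.length ∧ IsLS (w.take i) ∧ IsLS (w.drop i) ∧
      ∀ s, s <:+ w → s ≠ w → s ≠ [] → IsLS s → s.length ≤ w.length - i := by
  classical
  have hex : ∃ i, 1 ≤ i ∧ IsLS (w.drop i) := by
    refine ⟨w.length - 1, by omega, ?_⟩
    have hlen : (w.drop (w.length - 1)).length = 1 := by
      rw [List.length_drop]; omega
    obtain ⟨x, hx⟩ := List.length_eq_one_iff.1 hlen
    rw [hx]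
    exact isLS_singleton x
  set i := Nat.find hex with hi
  obtain ⟨hi1, hiLS⟩ := Nat.find_spec hex
  have hilt : i < w.length := by
    by_contra h
    push_neg at h
    rw [List.drop_eq_nil_of_le h] at hiLS
    exact hiLS.ne_nil rfl
  have hmax : ∀ s, s <:+ w → s ≠ w → s ≠ [] → IsLS s → s.length ≤ w.length - i := by
    intro s hs hsw hsn hsLS
    obtain ⟨p, hp⟩ := hs
    have hpd : w.drop p.length = s := by rw [← hp, List.drop_left]
    have hpn : 1 ≤ p.length := by
      rcases p with - | ⟨x, p'⟩
      · exact absurd (by simpa using hp) hsw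
      · simp
    have : i ≤ p.length := Nat.find_min' hex ⟨hpn, by rwa [hpd]⟩
    have := congrArg List.length hp
    rw [List.length_append] at this
    omega
  exact ⟨i, hi1, hilt, take_isLS hw i hi1 hilt hiLS hmax, hiLS, hmax⟩

end StdSplit

section Trees

variable {X : Type*} [LinearOrder X]

lemma mword_of (x : X) : mword (FreeMagma.of x) = [x] := rfl

lemma mword_mul (a b : FreeMagma X) :
    mword (FreeMagma.mul a b) = mword a ++ mword b := rfl

lemma mword_ne_nil : ∀ t : FreeMagma X, mword t ≠ []
  | .of x => by simp [mword_of]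
  | .mul a b => by
    rw [mword_mul]
    simp [mword_ne_nil a]

/-- existence of the standard bracketing of an LS word -/
lemma exists_std_tree : ∀ n : ℕ, ∀ w : List X, w.length ≤ n → IsLS w →
    ∃ t : FreeMagma X, mword t = w ∧ IsStd t := by
  intro n
  induction n with
  | zero =>
    intro w hn hw
    exact absurd (List.length_eq_zero_iff.1 (by omega)) hw.ne_nil
  | succ n IH =>
    intro w hn hw
    rcases lt_or_ge w.length 2 with h2 | h2
    · have h1 : w.length = 1 := by
        have : w ≠ [] := hw.ne_nil
        have : 1 ≤ w.length := by
          rcases w with - | ⟨x, w'⟩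
          · exact absurd rfl this
          · simp
        omega
      obtain ⟨x, rfl⟩ := List.length_eq_one_iff.1 h1
      exact ⟨.of x, rfl, trivial⟩
    · obtain ⟨i, hi1, hilt, haLS, hbLS, hmax⟩ := exists_std_split w hw h2
      have htake : (w.take i).length ≤ n := by
        rw [List.length_take]; omega
      have hdrop : (w.drop i).length ≤ n := by
        rw [List.length_drop]; omega
      obtain ⟨t₁, ht₁, hstd₁⟩ := IH (w.take i) htake haLS
      obtain ⟨t₂, ht₂, hstd₂⟩ := IH (w.drop i) hdrop hbLS
      refine ⟨.mul t₁ t₂, ?_, ?_⟩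
      · rw [mword_mul, ht₁, ht₂, List.take_append_drop]
      · refine ⟨hstd₁, hstd₂, ?_, ?_, ?_⟩
        · rw [ht₁, ht₂, List.take_append_drop]; exact hw
        · rw [ht₂]; exact hbLS
        · intro s hsn hsne hssuf hsLS
          rw [ht₁, ht₂, List.take_append_drop] at hsne hssuf
          rw [ht₂, List.length_drop]
          exact hmax s hssuf hsne hsn hsLS

/-- the 'good' predicate : at every node the two factors satisfy the
rotation inequality. This guarantees the leading monomial property. -/
def Good : FreeMagma X → Prop
  | .of _ => True
  | .mul a b => Good a ∧ Good b ∧ llt (mword b ++ mword a) (mword a ++ mword b)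

lemma good_of (x : X) : Good (FreeMagma.of x) := trivial

lemma good_mul {a b : FreeMagma X} (ha : Good a) (hb : Good b)
    (h : llt (mword b ++ mword a) (mword a ++ mword b)) : Good (FreeMagma.mul a b) :=
  ⟨ha, hb, h⟩

lemma IsStd.good : ∀ t : FreeMagma X, IsStd t → Good t
  | .of _, _ => trivial
  | .mul a b, h =>
    ⟨IsStd.good a h.1, IsStd.good b h.2.1,
      h.2.2.1.2 (mword a) (mword b) (mword_ne_nil a) (mword_ne_nil b) rfl⟩

/-- lifting a tree of letters to a tree of trees with singleton leaves -/
def liftT : FreeMagma X → FreeMagma (FreeMagma X)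
  | .of x => .of (.of x)
  | .mul a b => .mul (liftT a) (liftT b)

lemma mjoin_liftT : ∀ t : FreeMagma X, mjoin (liftT t) = t
  | .of x => rfl
  | .mul a b => by
    show FreeMagma.mul (mjoin (liftT a)) (mjoin (liftT b)) = _
    rw [mjoin_liftT a, mjoin_liftT b]

lemma leaves_liftT : ∀ t : FreeMagma X, leaves (liftT t) = (mword t).map FreeMagma.of
  | .of x => rfl
  | .mul a b => by
    show leaves (liftT a) ++ leaves (liftT b) = _
    rw [leaves_liftT a, leaves_liftT b, mword_mul, List.map_append]

end Trees
section Algebra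

variable {X : Type*} [LinearOrder X] (k : Type*) [Field k]

lemma mul_apply_take {A B : FA k X} {nA : ℕ}
    (hA : ∀ m : FreeMonoid X, A.coeff m ≠ 0 → m.toList.length = nA) (v : List X) :
    (A * B).coeff (FreeMonoid.ofList v) =
      A.coeff (FreeMonoid.ofList (v.take nA)) * B.coeff (FreeMonoid.ofList (v.drop nA)) := by
  classical
  set a₀ : FreeMonoid X := FreeMonoid.ofList (v.take nA) with ha₀
  set b₀ : FreeMonoid X := FreeMonoid.ofList (v.drop nA) with hb₀
  rw [MonoidAlgebra.coeff_mul, Finsupp.sum]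
  have hstep : (∑ a ∈ A.coeff.support,
      B.coeff.sum fun a₂ b₂ => if a * a₂ = FreeMonoid.ofList v then A.coeff a * b₂ else 0)
      = B.coeff.sum fun a₂ b₂ => if a₀ * a₂ = FreeMonoid.ofList v then A.coeff a₀ * b₂ else 0 := by
    apply Finset.sum_eq_single a₀
    · intro a ha hne
      apply Finset.sum_eq_zero
      intro b₂ hb₂
      show (if a * b₂ = FreeMonoid.ofList v then A.coeff a * B.coeff b₂ else 0) = 0
      rw [if_neg]
      intro he
      apply hne
      have h1 : a.toList ++ b₂.toList = v := congrArg FreeMonoid.toList he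
      have h2 : a.toList.length = nA := hA a (Finsupp.mem_support_iff.1 ha)
      have h3 : v.take nA = a.toList := by
        rw [← h1, List.take_left' h2]
      rw [ha₀, h3]
      rfl
    · intro ha
      apply Finset.sum_eq_zero
      intro b₂ _
      show (if a₀ * b₂ = FreeMonoid.ofList v then A.coeff a₀ * B.coeff b₂ else 0) = 0
      rw [Finsupp.notMem_support_iff.1 ha, zero_mul]
      exact ite_self 0
  rw [hstep]
  have hcond : ∀ a₂ : FreeMonoid X, (a₀ * a₂ = FreeMonoid.ofList v) ↔ a₂ = b₀ := by
    intro a₂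
    constructor
    · intro he
      have h1 : (v.take nA) ++ a₂.toList = v := congrArg FreeMonoid.toList he
      have h2 : a₂.toList = v.drop nA := by
        conv_rhs at h1 => rw [← List.take_append_drop nA v]
        exact List.append_cancel_left h1
      rw [hb₀, ← h2]
      rfl
    · rintro rfl
      show FreeMonoid.ofList (v.take nA ++ v.drop nA) = FreeMonoid.ofList v
      rw [List.take_append_drop]
  calc (B.coeff.sum fun a₂ b₂ => if a₀ * a₂ = FreeMonoid.ofList v then A.coeff a₀ * b₂ else 0)
      = B.coeff.sum fun a₂ b₂ => if a₂ = b₀ then A.coeff a₀ * b₂ else 0 := by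
        apply Finsupp.sum_congr
        intro a₂ _
        simp only [hcond a₂]
    _ = if b₀ ∈ B.coeff.support then A.coeff a₀ * B.coeff b₀ else 0 := Finsupp.sum_ite_eq' B.coeff b₀ _
    _ = A.coeff a₀ * B.coeff b₀ := by
        split
        · rfl
        · rename_i h
          rw [Finsupp.notMem_support_iff.1 h, mul_zero]

lemma llt_concat_cases {α β t₁ t₂ : List X} (h : llt (β ++ α) (α ++ β))
    (h₁ : t₁ = β ∨ (t₁.length = β.length ∧ llt t₁ β))
    (h₂ : t₂ = α ∨ (t₂.length = α.length ∧ llt t₂ α)) :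
    llt (t₁ ++ t₂) (α ++ β) := by
  rcases h₁ with rfl | ⟨hl₁, hlt₁⟩
  · rcases h₂ with rfl | ⟨hl₂, hlt₂⟩
    · exact h
    · exact llt_trans ((llt_append_left_iff t₁ t₂ α).2 hlt₂) h
  · exact llt_trans (llt_append_of_length_eq hlt₁ hl₁ t₂ α) h

lemma good_coeff : ∀ t : FreeMagma X, Good t →
    (evalM k t).coeff (FreeMonoid.ofList (mword t)) = 1 ∧
    ∀ v : List X, (evalM k t).coeff (FreeMonoid.ofList v) ≠ 0 →
      v = mword t ∨ (v.length = (mword t).length ∧ llt v (mword t))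
  | .of x, _ => by
    constructor
    · exact Finsupp.single_eq_same
    · intro v hv
      by_cases h : (FreeMonoid.of x) = FreeMonoid.ofList v
      · left
        have := congrArg FreeMonoid.toList h
        exact this.symm
      · exact absurd (Finsupp.single_eq_of_ne' h) hv
  | .mul a b, hg => by
    obtain ⟨hga, hgb, hltab⟩ := (hg : Good (FreeMagma.mul a b))
    obtain ⟨hA1, hA2⟩ := good_coeff a hga
    obtain ⟨hB1, hB2⟩ := good_coeff b hgb
    set α := mword a with hα
    set β := mword b with hβ
    have hlenA : ∀ m : FreeMonoid X, (evalM k a).coeff m ≠ 0 → m.toList.length = α.length := by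
      intro m hm
      rcases hA2 m.toList hm with h | h
      · rw [h]
      · exact h.1
    have hlenB : ∀ m : FreeMonoid X, (evalM k b).coeff m ≠ 0 → m.toList.length = β.length := by
      intro m hm
      rcases hB2 m.toList hm with h | h
      · rw [h]
      · exact h.1
    have heval : ∀ v : List X, (evalM k (FreeMagma.mul a b)).coeff (FreeMonoid.ofList v) =
        (evalM k a).coeff (FreeMonoid.ofList (v.take α.length)) *
          (evalM k b).coeff (FreeMonoid.ofList (v.drop α.length)) -
        (evalM k b).coeff (FreeMonoid.ofList (v.take β.length)) *
          (evalM k a).coeff (FreeMonoid.ofList (v.drop β.length)) := by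
      intro v
      show ((evalM k a * evalM k b) - (evalM k b * evalM k a)).coeff (FreeMonoid.ofList v) = _
      rw [MonoidAlgebra.coeff_sub, Finsupp.sub_apply, mul_apply_take k hlenA, mul_apply_take k hlenB]
    have hBA0 : ∀ v : List X,
        (evalM k b).coeff (FreeMonoid.ofList (v.take β.length)) *
          (evalM k a).coeff (FreeMonoid.ofList (v.drop β.length)) ≠ 0 →
        v.length = α.length + β.length ∧ llt v (α ++ β) := by
      intro v hv
      have h1 : (evalM k b).coeff (FreeMonoid.ofList (v.take β.length)) ≠ 0 :=
        fun h => hv (by rw [h, zero_mul])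
      have h2 : (evalM k a).coeff (FreeMonoid.ofList (v.drop β.length)) ≠ 0 :=
        fun h => hv (by rw [h, mul_zero])
      have hc1 := hB2 _ h1
      have hc2 := hA2 _ h2
      have hl1 : (v.take β.length).length = β.length := by
        rcases hc1 with h | h
        · rw [h]
        · exact h.1
      have hl2 : (v.drop β.length).length = α.length := by
        rcases hc2 with h | h
        · rw [h]
        · exact h.1
      have hvsplit : v.take β.length ++ v.drop β.length = v := List.take_append_drop _ v
      constructor
      · have := congrArg List.length hvsplit
        rw [List.length_append, hl1, hl2] at this
        omega
      · have := llt_concat_cases hltab hc1 hc2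
        rwa [hvsplit] at this
    constructor
    · rw [mword_mul, heval, ← hα, ← hβ]
      have e1 : (α ++ β).take α.length = α := List.take_left (l₁ := α) (l₂ := β)
      have e2 : (α ++ β).drop α.length = β := List.drop_left (l₁ := α) (l₂ := β)
      rw [e1, e2, hA1, hB1, one_mul]
      have hz : (evalM k b).coeff (FreeMonoid.ofList ((α ++ β).take β.length)) *
          (evalM k a).coeff (FreeMonoid.ofList ((α ++ β).drop β.length)) = 0 := by
        by_contra h0
        obtain ⟨-, hlt⟩ := hBA0 (α ++ β) h0
        exact llt_irrefl _ hlt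
      rw [hz, sub_zero]
    · intro v hv
      rw [mword_mul, ← hα, ← hβ]
      rw [heval] at hv
      by_cases h2 : (evalM k b).coeff (FreeMonoid.ofList (v.take β.length)) *
          (evalM k a).coeff (FreeMonoid.ofList (v.drop β.length)) = 0
      · rw [h2, sub_zero] at hv
        have ha1 : (evalM k a).coeff (FreeMonoid.ofList (v.take α.length)) ≠ 0 :=
          fun h => hv (by rw [h, zero_mul])
        have hb1 : (evalM k b).coeff (FreeMonoid.ofList (v.drop α.length)) ≠ 0 :=
          fun h => hv (by rw [h, mul_zero])
        have hc1 := hA2 _ ha1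
        have hc2 := hB2 _ hb1
        have hl1 : (v.take α.length).length = α.length := by
          rcases hc1 with h | h
          · rw [h]
          · exact h.1
        have hl2 : (v.drop α.length).length = β.length := by
          rcases hc2 with h | h
          · rw [h]
          · exact h.1
        have hvsplit : v.take α.length ++ v.drop α.length = v := List.take_append_drop _ v
        have hvlen : v.length = (α ++ β).length := by
          have := congrArg List.length hvsplit
          rw [List.length_append, hl1, hl2] at this
          rw [List.length_append]
          omega
        rcases hc1 with he1 | he1
        · rcases hc2 with he2 | he2
          · left
            rw [← hvsplit, he1, he2]
          · right
            refine ⟨hvlen, ?_⟩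
            have : llt (v.take α.length ++ v.drop α.length) (α ++ β) := by
              rw [he1]
              exact (llt_append_left_iff α _ β).2 he2.2
            rwa [hvsplit] at this
        · right
          refine ⟨hvlen, ?_⟩
          have : llt (v.take α.length ++ v.drop α.length) (α ++ β) :=
            llt_append_of_length_eq he1.2 he1.1 _ β
          rwa [hvsplit] at this
      · right
        obtain ⟨hl, hlt⟩ := hBA0 v h2
        exact ⟨by rw [List.length_append]; omega, hlt⟩

end Algebra
section Build

variable {X : Type*} [LinearOrder X]

lemma mjoin_of (t : FreeMagma X) : mjoin (FreeMagma.of t) = t := rfl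

lemma mjoin_mul (s t : FreeMagma (FreeMagma X)) :
    mjoin (FreeMagma.mul s t) = FreeMagma.mul (mjoin s) (mjoin t) := rfl

lemma leaves_of {α : Type*} (x : α) : leaves (FreeMagma.of x) = [x] := rfl

lemma leaves_mul {α : Type*} (s t : FreeMagma α) :
    leaves (FreeMagma.mul s t) = leaves s ++ leaves t := rfl

lemma length_pos_of_ne_nil {l : List X} (h : l ≠ []) : 1 ≤ l.length := by
  rcases l with - | ⟨x, l⟩
  · exact absurd rfl h
  · simp

/-- the left-normed extension of a good tree by the anti-CFL factors of `b` -/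
lemma build_right : ∀ n : ℕ, ∀ (b m : List X) (tb : FreeMagma (FreeMagma X)),
    b.length ≤ n → IsLS (m ++ b) → m ≠ [] → mword (mjoin tb) = m → Good (mjoin tb) →
    ∃ T : FreeMagma (FreeMagma X), leaves T = leaves tb ++ b.map FreeMagma.of ∧
      mword (mjoin T) = m ++ b ∧ Good (mjoin T) := by
  intro n
  induction n with
  | zero =>
    intro b m tb hn hLS hm hmw hg
    have hb : b = [] := List.length_eq_zero_iff.1 (by omega)
    subst hb
    exact ⟨tb, by simp, by simpa using hmw, hg⟩
  | succ n IH =>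
    intro b m tb hn hLS hm hmw hg
    rcases eq_or_ne b [] with rfl | hb
    · exact ⟨tb, by simp, by simpa using hmw, hg⟩
    · obtain ⟨c, hcb, hcn, hcLS, hcmax⟩ := exists_longest_LS_prefix b hb
      obtain ⟨s', hs'⟩ := hcb
      obtain ⟨tc, htc, hstdc⟩ := exists_std_tree c.length c (le_refl _) hcLS
      set T₁ : FreeMagma (FreeMagma X) := .mul tb (liftT tc) with hT₁
      have hjoin : mjoin T₁ = .mul (mjoin tb) tc := by
        rw [hT₁, mjoin_mul, mjoin_liftT]
      have hmw₁ : mword (mjoin T₁) = m ++ c := by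
        rw [hjoin, mword_mul, hmw, htc]
      have hg₁ : Good (mjoin T₁) := by
        rw [hjoin]
        refine good_mul hg (hstdc.good tc) ?_
        rw [htc, hmw]
        exact longest_prefix_llt hLS rfl hm hb ⟨s', hs'⟩ hcn hcLS hcmax
      have hleaves₁ : leaves T₁ = leaves tb ++ c.map FreeMagma.of := by
        rw [hT₁, leaves_mul, leaves_liftT, htc]
      have hs'len : s'.length ≤ n := by
        have := congrArg List.length hs'
        rw [List.length_append] at this
        have := length_pos_of_ne_nil hcn
        omega
      have hLS' : IsLS ((m ++ c) ++ s') := by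
        rw [List.append_assoc, hs']
        exact hLS
      obtain ⟨T, hl, hmwT, hgT⟩ := IH s' (m ++ c) T₁ hs'len hLS' (by simp [hm]) hmw₁ hg₁
      refine ⟨T, ?_, ?_, hgT⟩
      · rw [hl, hleaves₁, List.append_assoc, ← List.map_append, hs']
      · rw [hmwT, List.append_assoc, hs']

/-- main construction : a good bracketing of `w` with `u` bracketed as a block -/
lemma build : ∀ n : ℕ, ∀ (w a u b : List X) (tu : FreeMagma X),
    w.length ≤ n → IsLS w → IsLS u → w = a ++ u ++ b → mword tu = u → Good tu →
    ∃ T : FreeMagma (FreeMagma X),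
      leaves T = a.map FreeMagma.of ++ [tu] ++ b.map FreeMagma.of ∧
      mword (mjoin T) = w ∧ Good (mjoin T) := by
  intro n
  induction n with
  | zero =>
    intro w a u b tu hn hw hu hfac hmw hg
    exact absurd (List.length_eq_zero_iff.1 (by omega)) hw.ne_nil
  | succ n IH =>
    intro w a u b tu hn hw hu hfac hmw hg
    rcases eq_or_ne a [] with rfl | ha
    · rw [List.nil_append] at hfac
      subst hfac
      obtain ⟨T, hl, hmwT, hgT⟩ := build_right b.length b u (.of tu) (le_refl _) hw
        hu.ne_nil (by rw [mjoin_of, hmw]) (by rw [mjoin_of]; exact hg)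
      refine ⟨T, ?_, hmwT, hgT⟩
      rw [hl, leaves_of]
      simp
    · -- a ≠ [] : use the standard split
      have hual : 1 ≤ u.length := length_pos_of_ne_nil hu.ne_nil
      have haal : 1 ≤ a.length := length_pos_of_ne_nil ha
      have hwlen : w.length = a.length + u.length + b.length := by
        rw [hfac]; simp [List.length_append]; omega
      have h2 : 2 ≤ w.length := by omega
      obtain ⟨i, hi1, hilt, hw₁LS, hw₂LS, hmax⟩ := exists_std_split w hw h2
      have hrot : llt (w.drop i ++ w.take i) (w.take i ++ w.drop i) := by
        have hrot' := hw.2 (w.take i) (w.drop i) (by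
            intro h; have := congrArg List.length h; rw [List.length_take] at this
            simp only [List.length_nil] at this; omega)
          (by
            intro h; have := congrArg List.length h; rw [List.length_drop] at this
            simp only [List.length_nil] at this; omega)
          (List.take_append_drop i w).symm
        rw [List.take_append_drop i w]
        exact hrot'
      rcases le_or_gt (a.length + u.length) i with hc1 | hc1'
      · -- u lies inside w₁
        set j := i - (a.length + u.length) with hj
        have hW1 : w.take i = a ++ u ++ b.take j := by
          rw [hfac, List.take_append,
            List.take_of_length_le (show (a ++ u).length ≤ i by rw [List.length_append]; omega)]
          congr 1
          rw [List.length_append]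
        have hW2 : w.drop i = b.drop j := by
          rw [hfac, List.drop_append,
            List.drop_eq_nil_of_le (show (a ++ u).length ≤ i by rw [List.length_append]; omega),
            List.nil_append]
          congr 1
          rw [List.length_append]
        have htlen : (w.take i).length ≤ n := by
          rw [List.length_take]; omega
        obtain ⟨T₁, hl₁, hmw₁, hg₁⟩ := IH (w.take i) a u (b.take j) tu htlen
          hw₁LS hu hW1 hmw hg
        obtain ⟨t₂, ht₂, hstd₂⟩ := exists_std_tree (w.drop i).length (w.drop i)
          (le_refl _) hw₂LS
        refine ⟨.mul T₁ (liftT t₂), ?_, ?_, ?_⟩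
        · rw [leaves_mul, hl₁, leaves_liftT, ht₂, hW2, List.append_assoc,
            ← List.map_append, List.take_append_drop]
        · rw [mjoin_mul, mword_mul, mjoin_liftT, hmw₁, ht₂, List.take_append_drop]
        · rw [mjoin_mul, mjoin_liftT]
          refine good_mul hg₁ (hstd₂.good t₂) ?_
          rw [hmw₁, ht₂]
          exact hrot
      · rcases le_or_gt i a.length with hc2 | hc2'
        · -- u lies inside w₂
          have e1 : i - a.length = 0 := by omega
          have e2 : i - (a ++ u).length = 0 := by rw [List.length_append]; omega
          have hW1 : w.take i = a.take i := by
            rw [hfac, List.take_append, List.take_append,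
              e1, e2, List.take_zero, List.take_zero, List.append_nil, List.append_nil]
          have hW2 : w.drop i = a.drop i ++ u ++ b := by
            rw [hfac, List.drop_append, List.drop_append,
              e1, e2, List.drop_zero, List.drop_zero]
          have hdlen : (w.drop i).length ≤ n := by
            rw [List.length_drop]; omega
          obtain ⟨T₂, hl₂, hmw₂, hg₂⟩ := IH (w.drop i) (a.drop i) u b tu hdlen
            hw₂LS hu hW2 hmw hg
          obtain ⟨t₁, ht₁, hstd₁⟩ := exists_std_tree (w.take i).length (w.take i)
            (le_refl _) hw₁LS
          refine ⟨.mul (liftT t₁) T₂, ?_, ?_, ?_⟩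
          · rw [leaves_mul, hl₂, leaves_liftT, ht₁, hW1, ← List.append_assoc,
              ← List.append_assoc, ← List.map_append, List.take_append_drop,
              List.append_assoc]
          · rw [mjoin_mul, mword_mul, mjoin_liftT, hmw₂, ht₁, List.take_append_drop]
          · rw [mjoin_mul, mjoin_liftT]
            refine good_mul (hstd₁.good t₁) hg₂ ?_
            rw [hmw₂, ht₁]
            exact hrot
        · -- the straddle case is impossible
          exfalso
          set p := i - a.length with hp
          have hp1 : 1 ≤ p := by omega
          have hplt : p < u.length := by omega
          have hsplit : u = u.take p ++ u.drop p := (List.take_append_drop p u).symm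
          have h₁ : u.take p ≠ [] := by
            intro h
            have := congrArg List.length h
            rw [List.length_take] at this
            simp only [List.length_nil] at this
            omega
          have h₂ : u.drop p ≠ [] := by
            intro h
            have := congrArg List.length h
            rw [List.length_drop] at this
            simp only [List.length_nil] at this
            omega
          have hW2 : w.drop i = u.drop p ++ b := by
            rw [hfac, List.drop_append, List.drop_append,
              List.drop_eq_nil_of_le (show a.length ≤ i by omega),
              (show i - a.length = p from rfl),
              (show i - (a ++ u).length = 0 by rw [List.length_append]; omega),
              List.drop_zero, List.nil_append]
          have hLSs : IsLS (u.take p ++ w.drop i) :=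
            isLS_straddle hu hw₂LS hsplit h₁ h₂ ⟨b, hW2.symm⟩
          have hsfx : u.take p ++ w.drop i <:+ w := by
            refine ⟨a, ?_⟩
            rw [hW2]
            simp only [← List.append_assoc]
            rw [List.append_assoc a (u.take p) (u.drop p), ← hsplit]
            exact hfac.symm
          have hlen1 : (u.take p).length = p := by rw [List.length_take]; omega
          have hne : u.take p ++ w.drop i ≠ w := by
            intro h
            have := congrArg List.length h
            rw [List.length_append, hlen1, List.length_drop] at this
            omega
          have := hmax _ hsfx hne (by simp [h₁]) hLSs
          rw [List.length_append, hlen1, List.length_drop] at this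
          omega
end Build

/-- Shirshov's special bracketing: if `w = a ++ u ++ b` with `w`, `u` associative
Lyndon--Shirshov words, then `b = c ++ d` where `c` has Lyndon factorization
`c = c_1 ++ ... ++ c_k` (`c_1 ≤ ... ≤ c_k`), and there is a bracketing of `w` of
the form `[a [u c] d]`, whose block `[uc]` is the left-normed product
`[...[[u][c_1]]...[c_k]]` of the standard bracketings, and whose deg-lex leading
associative monomial is `w`. -/
theorem stmt_8 {w u a b : List X} (hw : IsLS w) (hu : IsLS u)
    (hfac : w = a ++ u ++ b) :
    ∃ c d : List X, b = c ++ d ∧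
      ∃ cs : List (List X), (∀ x ∈ cs, IsLS x) ∧
        List.Chain' (fun p q => ¬ llt q p) cs ∧ cs.flatten = c ∧
        ∃ tu : FreeMagma X, mword tu = u ∧ IsStd tu ∧
          ∃ tcs : List (FreeMagma X), tcs.map mword = cs ∧ (∀ t ∈ tcs, IsStd t) ∧
            ∃ T : FreeMagma (FreeMagma X),
              leaves T = (a.map FreeMagma.of) ++ [tcs.foldl FreeMagma.mul tu] ++
                (d.map FreeMagma.of) ∧
              IsLeading k (evalM k (mjoin T)) w := by

  obtain ⟨tu, htu, hstd⟩ := exists_std_tree u.length u (le_refl _) hu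
  obtain ⟨T, hleaves, hmwT, hgT⟩ :=
    build w.length w a u b tu (le_refl _) hw hu hfac htu (hstd.good tu)
  refine ⟨[], b, (List.nil_append b).symm, [], by simp, List.IsChain.nil, rfl,
    tu, htu, hstd, [], rfl, by simp, T, ?_, ?_⟩
  · exact hleaves
  · obtain ⟨h1, h2⟩ := good_coeff k (mjoin T) hgT
    rw [hmwT] at h1 h2
    refine ⟨by rw [h1]; exact one_ne_zero, fun v hv => ?_⟩
    rcases h2 v hv with h | h
    · exact Or.inl h
    · exact Or.inr (Or.inr h)
end
end

section
/- (Kukin's Lemma) Suppose w, u, v are associative Lyndon–Shirshov words and w = a u b v d for some (possibly empty) words a, b, d. Then there exists a Lie bracketing [w]_{u,v} of w of the form [a [u] b [v] d], in which both occurrences u and v appear as bracketed subwords via their standard bracketings, such that the deg-lex leading associative monomial of [w]_{u,v} in k⟨X⟩ equals w. -/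
noncomputable section

variable {X : Type*} [LinearOrder X] (k : Type*) [Field k]

namespace Kukin
variable {X : Type*} [LinearOrder X]

@[simp] theorem llt_nil (v : List X) : ¬ llt ([] : List X) v := by
  cases v <;> simp [llt]

@[simp] theorem llt_cons_nil (a : X) (u : List X) : llt (a :: u) [] := by
  simp [llt]

theorem llt_cons_iff {a b : X} {u v : List X} :
    llt (a :: u) (b :: v) ↔ a < b ∨ (a = b ∧ llt u v) := Iff.rfl

theorem llt_trans : ∀ {u v w : List X}, llt u v → llt v w → llt u w := by
  intro u
  induction u with
  | nil => intro v w h; exact absurd h (llt_nil v)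
  | cons a u ih =>
    intro v w h1 h2
    cases v with
    | nil => exact absurd h2 (llt_nil w)
    | cons b v =>
      cases w with
      | nil => exact llt_cons_nil a u
      | cons c w =>
        rcases h1 with h1 | ⟨rfl, h1⟩
        · rcases h2 with h2 | ⟨rfl, h2⟩
          · exact Or.inl (h1.trans h2)
          · exact Or.inl h1
        · rcases h2 with h2 | ⟨rfl, h2⟩
          · exact Or.inl h2
          · exact Or.inr ⟨rfl, ih h1 h2⟩

theorem llt_irrefl : ∀ {u : List X}, ¬ llt u u := by
  intro u
  induction u with
  | nil => exact llt_nil []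
  | cons a u ih =>
    rintro (h | ⟨-, h⟩)
    · exact lt_irrefl a h
    · exact ih h

theorem llt_asymm {u v : List X} (h : llt u v) : ¬ llt v u :=
  fun h' => llt_irrefl (llt_trans h h')

theorem llt_trichotomy : ∀ (u v : List X), llt u v ∨ u = v ∨ llt v u := by
  intro u
  induction u with
  | nil =>
    intro v
    cases v with
    | nil => exact Or.inr (Or.inl rfl)
    | cons b v => exact Or.inr (Or.inr (llt_cons_nil b v))
  | cons a u ih =>
    intro v
    cases v with
    | nil => exact Or.inl (llt_cons_nil a u)
    | cons b v =>
      rcases lt_trichotomy a b with h | rfl | h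
      · exact Or.inl (Or.inl h)
      · rcases ih v with h | rfl | h
        · exact Or.inl (Or.inr ⟨rfl, h⟩)
        · exact Or.inr (Or.inl rfl)
        · exact Or.inr (Or.inr (Or.inr ⟨rfl, h⟩))
      · exact Or.inr (Or.inr (Or.inl h))

theorem llt_append_left_iff : ∀ (p u v : List X), llt (p ++ u) (p ++ v) ↔ llt u v := by
  intro p
  induction p with
  | nil => intro u v; rfl
  | cons a p ih =>
    intro u v
    simp [List.cons_append, llt_cons_iff, ih]

theorem llt_append_right : ∀ (p : List X) {r : List X}, r ≠ [] → llt (p ++ r) p := by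
  intro p
  induction p with
  | nil =>
    intro r hr
    cases r with
    | nil => exact absurd rfl hr
    | cons a r => exact llt_cons_nil a r
  | cons a p ih => intro r hr; exact Or.inr ⟨rfl, ih hr⟩

/-- a proper prefix is llt-greater -/
theorem llt_of_prefix {p q : List X} (h : p <+: q) (hne : p ≠ q) : llt q p := by
  obtain ⟨r, rfl⟩ := h
  refine llt_append_right p fun h => ?_
  subst h; simp at hne

/-- LemA : if `q < s` then either `s` is a prefix of `q`, or the difference happens
at a position inside both, so appending anything keeps the inequality -/
theorem llt_cases : ∀ {q s : List X}, llt q s →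
    s <+: q ∨ ∀ t t' : List X, llt (q ++ t) (s ++ t') := by
  intro q
  induction q with
  | nil => intro s h; exact absurd h (llt_nil s)
  | cons a q ih =>
    intro s h
    cases s with
    | nil => exact Or.inl (List.nil_prefix)
    | cons b s =>
      rcases h with h | ⟨rfl, h⟩
      · exact Or.inr fun t t' => Or.inl h
      · rcases ih h with hp | hall
        · obtain ⟨t, rfl⟩ := hp
          exact Or.inl ⟨t, rfl⟩
        · exact Or.inr fun t t' => Or.inr ⟨rfl, hall t t'⟩

end Kukin

namespace Kukin
variable {X : Type*} [LinearOrder X]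

theorem suffix_append_cases {α : Type*} {x s t : List α} (h : x <:+ s ++ t) :
    x <:+ t ∨ ∃ q, q <:+ s ∧ x = q ++ t := by
  obtain ⟨p, hp⟩ := h
  have hx : x = (s ++ t).drop p.length := by
    rw [← hp]; simp
  rw [List.drop_append] at hx
  rcases le_or_gt p.length s.length with hle | hlt
  · right
    refine ⟨s.drop p.length, List.drop_suffix _ _, ?_⟩
    rw [hx, Nat.sub_eq_zero_of_le hle, List.drop_zero]
  · left
    rw [List.drop_eq_nil_of_le (le_of_lt hlt)] at hx
    rw [hx, List.nil_append]
    exact List.drop_suffix _ _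

theorem suffix_length_lt {α : Type*} {x y : List α} (h : x <:+ y) (hne : x ≠ y) :
    x.length < y.length := by
  obtain ⟨p, rfl⟩ := h
  rcases p with _ | ⟨a, p⟩
  · simp at hne
  · simp

theorem isLS_singleton (x : X) : IsLS [x] := by
  refine ⟨by simp, ?_⟩
  rintro (_ | ⟨a, u⟩) (_ | ⟨b, v⟩) hu hv h
  · exact absurd rfl hu
  · exact absurd rfl hu
  · exact absurd rfl hv
  · simp at h

/-- an LS word is llt-greater than each of its proper suffixes -/
theorem IsLS.suffix_llt {w s : List X} (hw : IsLS w) (hs : s <:+ w) (hne : s ≠ w)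
    (hnil : s ≠ []) : llt s w := by
  obtain ⟨t, rfl⟩ := hs
  have ht : t ≠ [] := by rintro rfl; exact hne rfl
  have hrot : llt (s ++ t) (t ++ s) := hw.2 t s ht hnil rfl
  rcases llt_trichotomy s (t ++ s) with h | h | h
  · exact h
  · exfalso
    have := congrArg List.length h
    simp at this
    exact ht this
  · exfalso
    rcases llt_cases h with hp | hall
    · obtain ⟨r, hr⟩ := hp
      have hrne : r ≠ [] := by
        rintro rfl
        simp at hr
        exact ht (by simpa using congrArg List.length hr)
      have h1 : llt t r := by
        have : llt (s ++ t) (s ++ r) := by rw [hr]; exact hrot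
        exact (llt_append_left_iff s t r).mp this
      have h2 : llt (t ++ s) (r ++ s) := by
        rcases llt_cases h1 with hp2 | hall2
        · exfalso
          have hlen : r.length = t.length := by
            have := congrArg List.length hr
            simp at this; omega
          have : r = t := hp2.eq_of_length hlen
          subst this
          exact llt_irrefl h1
        · exact hall2 s s
      have h3 : llt (r ++ s) (t ++ s) := by
        have := hw.2 s r hnil hrne (by rw [hr])
        exact this
      exact llt_irrefl (llt_trans h2 h3)
    · have : llt (t ++ s) (s ++ t) := by simpa using hall [] t
      exact llt_irrefl (llt_trans this hrot)

/-- converse criterion: a nonempty word greater than all its proper suffixes is LS -/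
theorem isLS_of_suffix {w : List X} (hne : w ≠ [])
    (h : ∀ s : List X, s ≠ [] → s ≠ w → s <:+ w → llt s w) : IsLS w := by
  refine ⟨hne, ?_⟩
  rintro u v hu hv rfl
  have hvlt : llt v (u ++ v) := by
    refine h v hv ?_ (List.suffix_append u v)
    intro hv2
    have := congrArg List.length hv2
    simp at this
    exact hu this
  rcases llt_cases hvlt with hp | hall
  · exfalso
    have := hp.length_le
    simp at this
    rcases u with _ | ⟨a, u⟩
    · exact hu rfl
    · simp at this
  · simpa using hall u []

/-- merging: if `s`, `t` are LS and `t < s` then `s ++ t` is LS -/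
theorem IsLS.append_of_llt {s t : List X} (hs : IsLS s) (ht : IsLS t) (h : llt t s) :
    IsLS (s ++ t) := by
  have hsne := hs.1
  have htne := ht.1
  have key0 : llt t (s ++ t) := by
    rcases llt_cases h with hp | hall
    · obtain ⟨z, rfl⟩ := hp
      have hz : z ≠ [] := by rintro rfl; simp at h; exact llt_irrefl h
      have hz2 : z ≠ s ++ z := by
        intro hzz
        have := congrArg List.length hzz
        simp at this
        exact hsne this
      have : llt z (s ++ z) := IsLS.suffix_llt ht (List.suffix_append s z) hz2 hz
      exact (llt_append_left_iff s z (s ++ z)).mpr this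
    · simpa using hall [] t
  apply isLS_of_suffix (by simp [hsne])
  intro q hq hqw hsuf
  rcases suffix_append_cases hsuf with hqt | ⟨q', hq's, rfl⟩
  · rcases eq_or_ne q t with rfl | hne
    · exact key0
    · exact llt_trans (IsLS.suffix_llt ht hqt hne hq) key0
  · rcases eq_or_ne q' [] with rfl | hq'ne
    · simpa using key0
    · have hq's' : q' ≠ s := by
        rintro rfl; exact hqw rfl
      have h1 : llt q' s := IsLS.suffix_llt hs hq's hq's' hq'ne
      rcases llt_cases h1 with hp | hall
      · exfalso
        have h2 := hp.length_le
        have h3 := suffix_length_lt hq's hq's'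
        omega
      · exact hall t t

end Kukin

namespace Kukin
variable {X : Type*} [LinearOrder X]

theorem suffix_of_suffix_le {α : Type*} {x y w : List α} (hx : x <:+ w) (hy : y <:+ w)
    (h : x.length ≤ y.length) : x <:+ y := by
  obtain ⟨p, rfl⟩ := hx
  obtain ⟨q, hq⟩ := hy
  have hlen : q.length ≤ p.length := by
    have := congrArg List.length hq
    simp at this
    omega
  have hy2 : y = List.drop q.length p ++ x := by
    have h1 : List.drop q.length (q ++ y) = y := by simp
    rw [hq, List.drop_append, Nat.sub_eq_zero_of_le hlen,
      List.drop_zero] at h1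
    exact h1.symm
  exact ⟨_, hy2.symm⟩

theorem exists_llt_max : ∀ (L : List (List X)), L ≠ [] →
    ∃ m ∈ L, ∀ s ∈ L, llt s m ∨ s = m := by
  intro L
  induction L with
  | nil => intro h; exact absurd rfl h
  | cons x L ih =>
    intro _
    rcases eq_or_ne L [] with rfl | hL
    · refine ⟨x, by simp, ?_⟩
      intro s hs
      simp at hs
      exact Or.inr hs
    · obtain ⟨m, hm, hmax⟩ := ih hL
      rcases llt_trichotomy x m with h | heq | h
      · refine ⟨m, by simp [hm], ?_⟩
        intro s hs
        rcases List.mem_cons.mp hs with rfl | hs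
        · exact Or.inl h
        · exact hmax s hs
      · refine ⟨x, by simp, ?_⟩
        intro s hs
        rcases List.mem_cons.mp hs with rfl | hs
        · exact Or.inr rfl
        · rcases hmax s hs with h' | rfl
          · exact Or.inl (heq ▸ h')
          · exact Or.inr heq.symm
      · refine ⟨x, by simp, ?_⟩
        intro s hs
        rcases List.mem_cons.mp hs with rfl | hs
        · exact Or.inr rfl
        · rcases hmax s hs with h' | rfl
          · exact Or.inl (llt_trans h' h)
          · exact Or.inl h

/-- existence of the llt-largest proper nonempty suffix, for words of length ≥ 2 -/
theorem exists_max_suffix {u : List X} (h2 : 2 ≤ u.length) :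
    ∃ m : List X, m ≠ [] ∧ m ≠ u ∧ m <:+ u ∧
      ∀ s : List X, s ≠ [] → s ≠ u → s <:+ u → llt s m ∨ s = m := by
  classical
  set L := u.tails.filter (fun s => s ≠ [] ∧ s ≠ u) with hL
  have hmem : ∀ s : List X, s ∈ L ↔ (s <:+ u ∧ s ≠ [] ∧ s ≠ u) := by
    intro s
    simp [hL, List.mem_filter, List.mem_tails, and_comm]
  have hne : L ≠ [] := by
    have : u.tail ∈ L := by
      rw [hmem]
      refine ⟨List.tail_suffix u, ?_, ?_⟩
      · intro h
        have := congrArg List.length h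
        simp at this
        omega
      · intro h
        have := congrArg List.length h
        simp at this
        omega
    intro h
    rw [h] at this
    simp at this
  obtain ⟨m, hm, hmax⟩ := exists_llt_max L hne
  rw [hmem] at hm
  exact ⟨m, hm.2.1, hm.2.2, hm.1, fun s h1 h2 h3 => hmax s ((hmem s).mpr ⟨h3, h1, h2⟩)⟩

end Kukin

namespace Kukin
variable {X : Type*} [LinearOrder X]

theorem exists_std : ∀ (n : ℕ) (u : List X), u.length ≤ n → IsLS u →
    ∃ t : FreeMagma X, mword t = u ∧ IsStd t := by
  intro n
  induction n with
  | zero =>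
    intro u h hu
    exact absurd (List.length_eq_zero_iff.mp (Nat.le_zero.mp h)) hu.1
  | succ n ih =>
    intro u hlen hu
    rcases le_or_gt u.length 1 with hl | hl
    · have h1 : u.length = 1 := by
        have : u ≠ [] := hu.1
        have := List.length_pos_iff.mpr this
        omega
      obtain ⟨x, rfl⟩ := List.length_eq_one_iff.mp h1
      exact ⟨.of x, rfl, by simp [IsStd]⟩
    · have h2 : 2 ≤ u.length := hl
      obtain ⟨m, hmne, hmu, hmsuf, hmax⟩ := exists_max_suffix h2
      obtain ⟨p, hp⟩ := hmsuf
      have hmsuf : m <:+ u := ⟨p, hp⟩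
      have hpne : p ≠ [] := by rintro rfl; simp at hp; exact hmu hp
      have hmLS : IsLS m := by
        apply isLS_of_suffix hmne
        intro s hs1 hs2 hsuf
        have hsu : s <:+ u := hsuf.trans hmsuf
        have hlt1 : s.length < m.length := suffix_length_lt hsuf hs2
        have hlt2 : m.length < u.length := suffix_length_lt hmsuf hmu
        have hsne_u : s ≠ u := by intro h; rw [h] at hlt1; omega
        rcases hmax s hs1 hsne_u hsu with h | rfl
        · exact h
        · exact absurd rfl hs2
      have hpLS : IsLS p := by
        apply isLS_of_suffix hpne
        intro q hq hqp hqsuf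
        rcases llt_trichotomy q p with h | heq | h
        · exact h
        · exact absurd heq hqp
        · exfalso
          obtain ⟨z, hz⟩ := hqsuf
          have hqm_suf : q ++ m <:+ u := ⟨z, by rw [← List.append_assoc, hz, hp]⟩
          have hqlen : q.length < p.length := suffix_length_lt ⟨z, hz⟩ hqp
          have hqm_ne_u : q ++ m ≠ u := by
            intro he
            have e1 := congrArg List.length he
            have e2 := congrArg List.length hp
            simp at e1 e2
            omega
          have hqm_lt : llt (q ++ m) u :=
            IsLS.suffix_llt hu hqm_suf hqm_ne_u (by simp [hq])
          rcases llt_cases h with hpre | hall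
          · obtain ⟨r, hr⟩ := hpre
            have hrne : r ≠ [] := by rintro rfl; simp at hr; exact hqp hr
            have h1 : llt m (r ++ m) := by
              have h0 : llt (q ++ m) (q ++ (r ++ m)) := by
                rw [← List.append_assoc, hr, hp]
                exact hqm_lt
              exact (llt_append_left_iff q m (r ++ m)).mp h0
            have hrm_suf : r ++ m <:+ u := ⟨q, by rw [← List.append_assoc, hr, hp]⟩
            have hrm_ne : r ++ m ≠ m := by
              intro he
              have := congrArg List.length he
              simp at this
              exact hrne this
            have hrm_ne_u : r ++ m ≠ u := by
              intro he
              have e1 := congrArg List.length he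
              have e2 := congrArg List.length hp
              have e3 := congrArg List.length hr
              have e4 := List.length_pos_iff.mpr hq
              simp at e1 e2 e3
              omega
            rcases hmax (r ++ m) (by simp [hrne]) hrm_ne_u hrm_suf with h' | h'
            · exact llt_irrefl (llt_trans h1 h')
            · exact hrm_ne h'
          · have h0 : llt u (q ++ m) := by rw [← hp]; exact hall m m
            exact llt_irrefl (llt_trans h0 hqm_lt)
      have hlenmp : p.length + m.length = u.length := by
        have := congrArg List.length hp
        simp at this
        omega
      have hmlenpos : 0 < m.length := List.length_pos_iff.mpr hmne
      have hplenpos : 0 < p.length := List.length_pos_iff.mpr hpne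
      obtain ⟨tp, htp, htps⟩ := ih p (by omega) hpLS
      obtain ⟨tm, htm, htms⟩ := ih m (by omega) hmLS
      refine ⟨.mul tp tm, by simp [mword, htp, htm, hp], ?_⟩
      refine ⟨htps, htms, ?_, ?_, ?_⟩
      · rw [htp, htm, hp]; exact hu
      · rw [htm]; exact hmLS
      · intro s hs1 hs2 hsuf hsLS
        rw [htp, htm, hp] at hs2 hsuf
        rw [htm]
        by_contra hgt
        push_neg at hgt
        have hmsufs : m <:+ s := suffix_of_suffix_le hmsuf hsuf (le_of_lt hgt)
        have hms : m ≠ s := by intro he; rw [he] at hgt; omega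
        have h1 : llt m s := IsLS.suffix_llt hsLS hmsufs hms hmne
        rcases hmax s hs1 hs2 hsuf with h' | rfl
        · exact llt_irrefl (llt_trans h1 h')
        · exact hms rfl

end Kukin

namespace Kukin
variable {X : Type*} [LinearOrder X]

@[simp] theorem mword_of (x : X) : mword (FreeMagma.of x) = [x] := rfl
@[simp] theorem mword_mul (a b : FreeMagma X) : mword (a * b) = mword a ++ mword b := rfl

theorem mword_ne_nil : ∀ (t : FreeMagma X), mword t ≠ [] := by
  intro t
  induction t with
  | ih1 x => simp
  | ih2 a b iha ihb => simp [iha]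

/-- every node of the tree satisfies the rotation inequality -/
def Good : FreeMagma X → Prop
  | .of _ => True
  | .mul a b => Good a ∧ Good b ∧ llt (mword b ++ mword a) (mword a ++ mword b)

@[simp] theorem good_of (x : X) : Good (FreeMagma.of x) := trivial
theorem good_mul (a b : FreeMagma X) :
    Good (a * b) ↔ Good a ∧ Good b ∧ llt (mword b ++ mword a) (mword a ++ mword b) :=
  Iff.rfl

theorem isStd_mul (a b : FreeMagma X) :
    IsStd (a * b) ↔ (IsStd a ∧ IsStd b ∧ IsLS (mword a ++ mword b) ∧ IsLS (mword b) ∧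
      ∀ s : List X, s ≠ [] → s ≠ mword a ++ mword b → s <:+ mword a ++ mword b →
        IsLS s → s.length ≤ (mword b).length) := Iff.rfl

theorem IsStd.good : ∀ {t : FreeMagma X}, IsStd t → Good t := by
  intro t
  induction t with
  | ih1 x => intro _; trivial
  | ih2 a b iha ihb =>
    intro h
    obtain ⟨h1, h2, h3, -, -⟩ := (isStd_mul a b).mp h
    exact (good_mul a b).mpr
      ⟨iha h1, ihb h2, h3.2 (mword a) (mword b) (mword_ne_nil a) (mword_ne_nil b) rfl⟩

variable (k : Type*) [Field k]

/-- `w` is the leading monomial of `f`, and every monomial of `f` has the same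
length as `w` -/
def LeadAll (f : FA k X) (w : List X) : Prop :=
  f.coeff (FreeMonoid.ofList w) ≠ 0 ∧ ∀ x : FreeMonoid X, f.coeff x ≠ 0 →
    FreeMonoid.toList x = w ∨
      ((FreeMonoid.toList x).length = w.length ∧ llt (FreeMonoid.toList x) w)

variable {k}

theorem toList_eq_iff {x : FreeMonoid X} {w : List X} :
    FreeMonoid.toList x = w ↔ x = FreeMonoid.ofList w := by
  constructor
  · intro h; rw [← FreeMonoid.ofList_toList x, h]
  · intro h; rw [h, FreeMonoid.toList_ofList]

theorem LeadAll.mul {f g : FA k X} {m n : List X} (hf : LeadAll k f m) (hg : LeadAll k g n) :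
    LeadAll k (f * g) (m ++ n) := by
  classical
  constructor
  · rw [MonoidAlgebra.coeff_mul]
    rw [Finsupp.sum]
    rw [Finset.sum_eq_single_of_mem (FreeMonoid.ofList m)
      (Finsupp.mem_support_iff.mpr hf.1) ?_]
    · rw [Finsupp.sum]
      rw [Finset.sum_eq_single_of_mem (FreeMonoid.ofList n)
        (Finsupp.mem_support_iff.mpr hg.1) ?_]
      · rw [if_pos (FreeMonoid.ofList_append m n).symm]
        exact mul_ne_zero hf.1 hg.1
      · intro b hb hbn
        rw [if_neg]
        intro he
        apply hbn
        have he2 := congrArg FreeMonoid.toList he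
        rw [FreeMonoid.toList_mul, FreeMonoid.toList_ofList, FreeMonoid.toList_ofList] at he2
        exact toList_eq_iff.mp (List.append_cancel_left he2)
    · intro a ha ham
      apply Finset.sum_eq_zero
      intro b hb
      dsimp only
      rw [if_neg]
      intro he
      apply ham
      have hta := hf.2 a (Finsupp.mem_support_iff.mp ha)
      have he2 := congrArg FreeMonoid.toList he
      rw [FreeMonoid.toList_mul, FreeMonoid.toList_ofList] at he2
      rcases hta with hta | ⟨hlen, -⟩
      · rw [toList_eq_iff.mp hta]
      · have := List.append_inj he2 (by rw [hlen])
        rw [toList_eq_iff.mp this.1]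
  · intro x hx
    have hx' : x ∈ (f * g).coeff.support := Finsupp.mem_support_iff.mpr hx
    have := MonoidAlgebra.support_coeff_mul_subset f g hx'
    rw [Finset.mem_mul] at this
    obtain ⟨y, hy, z, hz, rfl⟩ := this
    have hyf := hf.2 y (Finsupp.mem_support_iff.mp hy)
    have hzg := hg.2 z (Finsupp.mem_support_iff.mp hz)
    rw [FreeMonoid.toList_mul]
    have hzlen : (FreeMonoid.toList z).length = n.length :=
      hzg.elim (fun h => by rw [h]) fun h => h.1
    rcases hyf with hym | ⟨hylen, hyllt⟩
    · rcases hzg with hzn | ⟨_, hzllt⟩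
      · left; rw [hym, hzn]
      · right
        constructor
        · simp [hym, hzlen]
        · rw [hym]
          exact (llt_append_left_iff m _ n).mpr hzllt
    · right
      refine ⟨by simp [hylen, hzlen], ?_⟩
      rcases llt_cases hyllt with hp | hall
      · exfalso
        have := hp.eq_of_length hylen.symm
        rw [this] at hyllt
        exact llt_irrefl hyllt
      · exact hall _ _

theorem LeadAll.bracket {f g : FA k X} {m n : List X} (hf : LeadAll k f m)
    (hg : LeadAll k g n) (hnode : llt (n ++ m) (m ++ n)) :
    LeadAll k (f * g - g * f) (m ++ n) := by
  have hfg := hf.mul hg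
  have hgf := hg.mul hf
  have hgf0 : (g * f).coeff (FreeMonoid.ofList (m ++ n)) = 0 := by
    by_contra h0
    rcases hgf.2 _ h0 with he | ⟨-, hlt⟩
    · rw [FreeMonoid.toList_ofList] at he
      rw [he] at hnode
      exact llt_irrefl hnode
    · rw [FreeMonoid.toList_ofList] at hlt
      exact llt_irrefl (llt_trans hlt hnode)
  constructor
  · rw [MonoidAlgebra.coeff_sub, Finsupp.sub_apply, hgf0, sub_zero]
    exact hfg.1
  · intro x hx
    rw [MonoidAlgebra.coeff_sub, Finsupp.sub_apply] at hx
    rcases eq_or_ne ((f * g).coeff x) 0 with h1 | h1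
    · rw [h1, zero_sub, neg_ne_zero] at hx
      rcases hgf.2 x hx with he | ⟨hlen, hlt⟩
      · right
        rw [he]
        exact ⟨by simp [Nat.add_comm], hnode⟩
      · right
        refine ⟨?_, llt_trans hlt hnode⟩
        simp only [List.length_append] at hlen ⊢
        omega
    · exact hfg.2 x h1

theorem evalM_of (x : X) :
    evalM k (FreeMagma.of x) = MonoidAlgebra.single (FreeMonoid.of x) 1 := rfl
theorem evalM_mul (a b : FreeMagma X) :
    evalM k (a * b) = evalM k a * evalM k b - evalM k b * evalM k a := rfl

theorem good_leadAll : ∀ {t : FreeMagma X}, Good t → LeadAll k (evalM k t) (mword t) := by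
  intro t
  induction t with
  | ih1 x =>
    intro _
    classical
    rw [evalM_of]
    simp only [mword_of]
    constructor
    · have h0 : FreeMonoid.ofList [x] = FreeMonoid.of x := rfl
      rw [h0, MonoidAlgebra.coeff_single, Finsupp.single_apply, if_pos rfl]
      exact one_ne_zero
    · intro y hy
      left
      rw [MonoidAlgebra.coeff_single, Finsupp.single_apply] at hy
      by_cases hxy : FreeMonoid.of x = y
      · rw [← hxy]; rfl
      · rw [if_neg hxy] at hy; exact absurd rfl hy
  | ih2 a b iha ihb =>
    intro h
    obtain ⟨h1, h2, h3⟩ := (good_mul a b).mp h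
    rw [evalM_mul, mword_mul]
    exact (iha h1).bracket (ihb h2) h3

end Kukin

namespace Kukin
variable {X : Type*} [LinearOrder X]

@[simp] theorem mjoin_of (t : FreeMagma X) : mjoin (FreeMagma.of t) = t := rfl
@[simp] theorem mjoin_mul (x y : FreeMagma (FreeMagma X)) :
    mjoin (x * y) = mjoin x * mjoin y := rfl
@[simp] theorem leaves_of {α : Type*} (t : α) : leaves (FreeMagma.of t) = [t] := rfl
@[simp] theorem leaves_mul {α : Type*} (x y : FreeMagma α) :
    leaves (x * y) = leaves x ++ leaves y := rfl

/-- the word of an element of a list of tree-of-trees -/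
private def wrd (T : FreeMagma (FreeMagma X)) : List X := mword (mjoin T)

theorem chain_lemma : ∀ (M : List (FreeMagma (FreeMagma X))) (x z : FreeMagma (FreeMagma X)),
    (∀ L₁ (p q : FreeMagma (FreeMagma X)) L₂, x :: (M ++ [z]) = L₁ ++ p :: q :: L₂ →
      ¬ llt (wrd q) (wrd p)) →
    llt (wrd x) (wrd z) ∨ wrd x = wrd z := by
  intro M
  induction M with
  | nil =>
    intro x z hnd
    have := hnd [] x z [] rfl
    rcases llt_trichotomy (wrd x) (wrd z) with h | h | h
    · exact Or.inl h
    · exact Or.inr h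
    · exact absurd h this
  | cons y M ih =>
    intro x z hnd
    have h1 := hnd [] x y (M ++ [z]) rfl
    have h1' : llt (wrd x) (wrd y) ∨ wrd x = wrd y := by
      rcases llt_trichotomy (wrd x) (wrd y) with h | h | h
      · exact Or.inl h
      · exact Or.inr h
      · exact absurd h h1
    have h2 := ih y z (fun L₁ p q L₂ he => hnd (x :: L₁) p q L₂ (by simp only [List.cons_append]; exact congrArg (List.cons x) he))
    rcases h1' with h1' | h1'
    · rcases h2 with h2 | h2
      · exact Or.inl (llt_trans h1' h2)
      · exact Or.inl (h2 ▸ h1')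
    · rw [h1']
      exact h2

theorem join_words_ne_nil (L : List (FreeMagma (FreeMagma X))) (h : L ≠ []) :
    (L.map wrd).flatten ≠ [] := by
  rcases L with _ | ⟨x, L⟩
  · exact absurd rfl h
  · simp only [List.map_cons, List.flatten_cons]
    intro he
    exact mword_ne_nil (mjoin x) (List.append_eq_nil_iff.mp he).1

theorem exists_tree : ∀ (N : ℕ) (L : List (FreeMagma (FreeMagma X))), L.length ≤ N →
    L ≠ [] →
    (∀ T ∈ L, Good (mjoin T) ∧ IsLS (wrd T)) →
    IsLS ((L.map wrd).flatten) →
    ∃ T : FreeMagma (FreeMagma X),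
      leaves T = (L.map leaves).flatten ∧
      Good (mjoin T) ∧
      mword (mjoin T) = (L.map wrd).flatten := by
  intro N
  induction N with
  | zero =>
    intro L hlen hne _ _
    rw [Nat.le_zero, List.length_eq_zero_iff] at hlen
    exact absurd hlen hne
  | succ N ih =>
    intro L hlen hne hmem hLS
    classical
    rcases L with _ | ⟨x0, M0⟩
    · exact absurd rfl hne
    rcases M0 with _ | ⟨y0, M1⟩
    · refine ⟨x0, by simp, (hmem x0 (by simp)).1, by simp [wrd]⟩
    -- at least two elements; look for an adjacent descent
    rcases em (∃ (L₁ : List (FreeMagma (FreeMagma X))) (p : FreeMagma (FreeMagma X))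
        (q : FreeMagma (FreeMagma X)) (L₂ : List (FreeMagma (FreeMagma X))),
        x0 :: y0 :: M1 = L₁ ++ p :: q :: L₂ ∧ llt (wrd q) (wrd p)) with hdesc | hdesc
    · obtain ⟨L₁, p, q, L₂, hL, hlt⟩ := hdesc
      have hmem' : ∀ T ∈ x0 :: y0 :: M1, Good (mjoin T) ∧ IsLS (wrd T) := hmem
      have hpmem : p ∈ x0 :: y0 :: M1 := by rw [hL]; simp
      have hqmem : q ∈ x0 :: y0 :: M1 := by rw [hL]; simp
      have hpq : IsLS (wrd p ++ wrd q) :=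
        IsLS.append_of_llt (hmem' p hpmem).2 (hmem' q hqmem).2 hlt
      have hnode : llt (wrd q ++ wrd p) (wrd p ++ wrd q) :=
        hpq.2 (wrd p) (wrd q) (mword_ne_nil _) (mword_ne_nil _) rfl
      set L' := L₁ ++ (p * q) :: L₂ with hL'
      have hlen' : L'.length ≤ N := by
        have e1 := congrArg List.length hL
        simp [hL'] at e1 ⊢
        simp at hlen
        omega
      have hne' : L' ≠ [] := by simp [hL']
      have hjoin : (L'.map wrd).flatten = ((x0 :: y0 :: M1).map wrd).flatten := by
        rw [hL, hL']
        simp [wrd, List.map_append, List.flatten_append]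
      have hmemL' : ∀ T ∈ L', Good (mjoin T) ∧ IsLS (wrd T) := by
        intro T hT
        rw [hL'] at hT
        rcases List.mem_append.mp hT with hT | hT
        · exact hmem' T (by rw [hL]; exact List.mem_append_left _ hT)
        · rcases List.mem_cons.mp hT with rfl | hT
          · refine ⟨?_, ?_⟩
            · rw [mjoin_mul]
              exact (good_mul _ _).mpr ⟨(hmem' p hpmem).1, (hmem' q hqmem).1, hnode⟩
            · show IsLS (mword (mjoin (p * q)))
              rw [mjoin_mul, mword_mul]
              exact hpq
          · exact hmem' T (by rw [hL]; exact List.mem_append_right _ (by simp [hT]))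
      obtain ⟨T, hT1, hT2, hT3⟩ := ih L' hlen' hne' hmemL' (by rw [hjoin]; exact hLS)
      refine ⟨T, ?_, hT2, by rw [hT3, hjoin]⟩
      rw [hT1, hL, hL']
      simp [List.map_append, List.flatten_append]
    · exfalso
      push_neg at hdesc
      obtain ⟨M', z, hM⟩ := (List.eq_nil_or_concat (y0 :: M1)).resolve_left (by simp)
      rw [List.concat_eq_append] at hM
      have hchain := chain_lemma M' x0 z (by
        intro L₁ p q L₂ he
        refine hdesc L₁ p q L₂ ?_
        rw [hM]
        exact he)
      set W := ((x0 :: y0 :: M1).map wrd).flatten with hW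
      have hWx : W = wrd x0 ++ ((y0 :: M1).map wrd).flatten := by simp [hW]
      have hrest : ((y0 :: M1).map wrd).flatten ≠ [] := join_words_ne_nil _ (by simp)
      have hWltx : llt W (wrd x0) := by
        refine llt_of_prefix ⟨_, hWx.symm⟩ ?_
        intro h
        apply hrest
        have h2 : wrd x0 ++ ((y0 :: M1).map wrd).flatten = wrd x0 ++ [] := by
          rw [List.append_nil, ← hWx, ← h]
        exact List.append_cancel_left h2
      have hWsuf : W = ((x0 :: M').map wrd).flatten ++ wrd z := by
        rw [hW, show y0 :: M1 = M' ++ [z] from hM]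
        simp
      have hPne : ((x0 :: M').map wrd).flatten ≠ [] := join_words_ne_nil _ (by simp)
      have hzltW : llt (wrd z) W := by
        refine IsLS.suffix_llt hLS ⟨_, hWsuf.symm⟩ ?_ (mword_ne_nil _)
        intro h
        apply hPne
        rw [h] at hWsuf
        have h2 : ((x0 :: M').map wrd).flatten ++ W = [] ++ W := by
          rw [List.nil_append, ← hWsuf]
        exact List.append_cancel_right h2
      have hWltz : llt W (wrd z) := by
        rcases hchain with h | h
        · exact llt_trans hWltx h
        · exact h ▸ hWltx
      exact llt_irrefl (llt_trans hzltW hWltz)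

end Kukin

namespace Kukin
variable {X : Type*} [LinearOrder X]

theorem flatten_map_of (l : List X) :
    (List.map mword (List.map FreeMagma.of l)).flatten = l := by
  induction l with
  | nil => simp
  | cons x l ih => simp_all

theorem join_map_singleton {α : Type*} (l : List α) :
    (l.map (fun t => ([t] : List α))).flatten = l := by
  induction l with
  | nil => simp
  | cons x l ih => simp_all

end Kukin

/-- Kukin's Lemma: if `w = a ++ u ++ b ++ v ++ d` with `w`, `u`, `v` associative
Lyndon--Shirshov words, then there is a Lie bracketing of `w` of the form
`[a [u] b [v] d]` (the occurrences of `u` and `v` are kept as whole blocks,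
bracketed by their standard bracketings) whose deg-lex leading associative
monomial is `w`. -/
theorem stmt_10 {w u v a b d : List X} (hw : IsLS w) (hu : IsLS u) (hv : IsLS v)
    (hfac : w = a ++ u ++ b ++ v ++ d) :
    ∃ tu tv : FreeMagma X, mword tu = u ∧ IsStd tu ∧ mword tv = v ∧ IsStd tv ∧
      ∃ T : FreeMagma (FreeMagma X),
        leaves T = (a.map FreeMagma.of) ++ [tu] ++ (b.map FreeMagma.of) ++ [tv] ++
          (d.map FreeMagma.of) ∧
        IsLeading k (evalM k (mjoin T)) w := by
  classical
  obtain ⟨tu, htu, htus⟩ := Kukin.exists_std u.length u le_rfl hu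
  obtain ⟨tv, htv, htvs⟩ := Kukin.exists_std v.length v le_rfl hv
  refine ⟨tu, tv, htu, htus, htv, htvs, ?_⟩
  set A : List (FreeMagma X) :=
    (a.map FreeMagma.of) ++ [tu] ++ (b.map FreeMagma.of) ++ [tv] ++ (d.map FreeMagma.of)
    with hA
  have hAne : A ≠ [] := by simp [hA]
  have hAmem : ∀ t ∈ A, Kukin.Good t ∧ IsLS (mword t) := by
    intro t ht
    simp only [hA, List.mem_append, List.mem_singleton, List.mem_map] at ht
    rcases ht with ((((⟨x, -, rfl⟩ | rfl) | ⟨x, -, rfl⟩) | rfl) | ⟨x, -, rfl⟩)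
    · exact ⟨trivial, by rw [Kukin.mword_of]; exact Kukin.isLS_singleton x⟩
    · exact ⟨Kukin.IsStd.good htus, htu ▸ hu⟩
    · exact ⟨trivial, by rw [Kukin.mword_of]; exact Kukin.isLS_singleton x⟩
    · exact ⟨Kukin.IsStd.good htvs, htv ▸ hv⟩
    · exact ⟨trivial, by rw [Kukin.mword_of]; exact Kukin.isLS_singleton x⟩
  have hwrd : ∀ t : FreeMagma X, Kukin.wrd (FreeMagma.of t) = mword t := fun _ => rfl
  have hjoin : ((A.map FreeMagma.of).map Kukin.wrd).flatten = w := by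
    rw [List.map_map]
    have he : (Kukin.wrd ∘ FreeMagma.of : FreeMagma X → List X) = mword := rfl
    rw [he, hA, hfac]
    simp only [List.map_append, List.flatten_append, List.map_cons, List.map_nil,
      List.flatten_cons, List.flatten_nil, htu, htv, List.append_nil]
    rw [Kukin.flatten_map_of, Kukin.flatten_map_of, Kukin.flatten_map_of]
  obtain ⟨T, hT1, hT2, hT3⟩ := Kukin.exists_tree (A.map FreeMagma.of).length
    (A.map FreeMagma.of) le_rfl (by simp [hAne])
    (by
      intro T hT
      obtain ⟨t, ht, rfl⟩ := List.mem_map.mp hT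
      rw [Kukin.mjoin_of]
      exact ⟨(hAmem t ht).1, (hwrd t) ▸ (hAmem t ht).2⟩)
    (by rw [hjoin]; exact hw)
  refine ⟨T, ?_, ?_⟩
  · rw [hT1, List.map_map]
    have he : (leaves ∘ FreeMagma.of : FreeMagma X → List (FreeMagma X)) =
        fun t => [t] := rfl
    rw [he, Kukin.join_map_singleton]
  · have hlead := Kukin.good_leadAll (k := k) hT2
    rw [hT3, hjoin] at hlead
    refine ⟨hlead.1, ?_⟩
    intro v' hv'
    rcases hlead.2 (FreeMonoid.ofList v') hv' with h | ⟨hlen, hllt⟩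
    · rw [FreeMonoid.toList_ofList] at h
      exact Or.inl h
    · rw [FreeMonoid.toList_ofList] at hlen hllt
      exact Or.inr (Or.inr ⟨hlen, hllt⟩)
end
end

section
/- In the free Lie algebra over a field k generated by Y = {a, b, c}, the left-normed elements t_i = [[...[[a,b],b],...,b],c] (with i occurrences of b), for i = 1, 2, 3, ..., generate a free Lie subalgebra and form a set of free generators of that subalgebra. -/
noncomputable section

variable (k : Type*) [Field k]

/-- The element `[[...[[a,b],b],...,b]]` with `i` occurrences of `b`
in the free Lie algebra on three generators `a = 0`, `b = 1`, `c = 2`. -/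
def abPow : ℕ → FreeLieAlgebra k (Fin 3)
  | 0 => FreeLieAlgebra.of k 0
  | n + 1 => ⁅abPow n, FreeLieAlgebra.of k 1⁆

/-- The left-normed element `⟨a b^i c⟩ = [[...[[a,b],b],...,b],c]` with `i ≥ 1`
occurrences of `b`. -/
def abc (i : ℕ) : FreeLieAlgebra k (Fin 3) := ⁅abPow k (i + 1), FreeLieAlgebra.of k 2⁆

open FreeLieAlgebra

namespace AuxStmt12

variable {k : Type*} [Field k] {X : Type*}

abbrev Dbl (k : Type*) [Field k] (X : Type*) :=
  FreeLieAlgebra k X × FreeLieAlgebra k X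

instance dblBracket : Bracket (Dbl k X) (Dbl k X) :=
  ⟨fun p q => (⁅p.1, q.1⁆, ⁅p.1, q.2⁆ + ⁅p.2, q.1⁆)⟩

@[simp] lemma dbl_bracket_fst (p q : Dbl k X) : ⁅p, q⁆.1 = ⁅p.1, q.1⁆ := rfl
@[simp] lemma dbl_bracket_snd (p q : Dbl k X) :
    ⁅p, q⁆.2 = ⁅p.1, q.2⁆ + ⁅p.2, q.1⁆ := rfl

instance dblLieRing : LieRing (Dbl k X) where
  add_lie p q r := by
    refine Prod.ext ?_ ?_ <;>
      simp only [dbl_bracket_fst, dbl_bracket_snd, Prod.fst_add, Prod.snd_add,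
        add_lie, lie_add] <;> abel
  lie_add p q r := by
    refine Prod.ext ?_ ?_ <;>
      simp only [dbl_bracket_fst, dbl_bracket_snd, Prod.fst_add, Prod.snd_add,
        add_lie, lie_add] <;> abel
  lie_self p := by
    refine Prod.ext ?_ ?_
    · simp
    · show ⁅p.1, p.2⁆ + ⁅p.2, p.1⁆ = (0 : FreeLieAlgebra k X)
      rw [← lie_skew p.1 p.2]; abel
  leibniz_lie p q r := by
    refine Prod.ext ?_ ?_ <;>
      simp only [dbl_bracket_fst, dbl_bracket_snd, Prod.fst_add, Prod.snd_add,
        lie_add, add_lie, lie_lie] <;> abel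

instance dblLieAlgebra : LieAlgebra k (Dbl k X) where
  lie_smul t p q := by
    refine Prod.ext ?_ ?_ <;>
      simp only [dbl_bracket_fst, dbl_bracket_snd, Prod.smul_fst, Prod.smul_snd,
        lie_smul, smul_add]

end AuxStmt12

namespace AuxStmt12

variable {k : Type*} [Field k] {X : Type*}

/-- First projection as a Lie algebra morphism. -/
def dblFst : Dbl k X →ₗ⁅k⁆ FreeLieAlgebra k X where
  toFun := Prod.fst
  map_add' _ _ := rfl
  map_smul' _ _ := rfl
  map_lie' := rfl

variable (f : X → FreeLieAlgebra k X)

def phi : FreeLieAlgebra k X →ₗ⁅k⁆ Dbl k X :=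
  lift k (fun x => (of k x, f x))

lemma phi_fst (a : FreeLieAlgebra k X) : (phi f a).1 = a := by
  have h : (dblFst.comp (phi f) : FreeLieAlgebra k X →ₗ⁅k⁆ FreeLieAlgebra k X)
      = LieHom.id := by
    apply hom_ext
    intro x
    simp [phi, dblFst, lift_of_apply, LieHom.comp_apply]
  simpa [dblFst, LieHom.comp_apply] using DFunLike.congr_fun h a

/-- The derivation of the free Lie algebra taking prescribed values on generators. -/
def derLift : LieDerivation k (FreeLieAlgebra k X) (FreeLieAlgebra k X) where
  toLinearMap := (LinearMap.snd k (FreeLieAlgebra k X) (FreeLieAlgebra k X)).comp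
    (phi f).toLinearMap
  leibniz' a b := by
    have h := congrArg Prod.snd ((phi f).map_lie (x := a) (y := b))
    simp only [dbl_bracket_snd, phi_fst] at h
    simp only [LinearMap.coe_comp, Function.comp_apply, LieHom.coe_toLinearMap,
      LinearMap.snd_apply, h]
    rw [← lie_skew b (phi f a).2]
    abel

@[simp] lemma derLift_of (x : X) : derLift f (of k x) = f x := by
  simp [derLift, phi, lift_of_apply]

end AuxStmt12

namespace AuxStmt12

variable {k : Type*} [Field k]

abbrev NW (k : Type*) [Field k] := FreeLieAlgebra k (List (Fin 2))
abbrev AW (k : Type*) [Field k] := FreeLieAlgebra k (Fin 2)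

/-- The derivation prepending the letter `j`. -/
def dj (j : Fin 2) : LieDerivation k (NW k) (NW k) :=
  derLift (fun w => of k (j :: w))

/-- The action of the free Lie algebra on `b, c` on `NW` by derivations. -/
def rho : AW k →ₗ⁅k⁆ LieDerivation k (NW k) (NW k) :=
  lift k dj

abbrev SD (k : Type*) [Field k] := AW k × NW k

instance sdBracket : Bracket (SD k) (SD k) :=
  ⟨fun p q => (⁅p.1, q.1⁆, rho p.1 q.2 - rho q.1 p.2 + ⁅p.2, q.2⁆)⟩

@[simp] lemma sd_bracket_fst (p q : SD k) : ⁅p, q⁆.1 = ⁅p.1, q.1⁆ := rfl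
@[simp] lemma sd_bracket_snd (p q : SD k) :
    ⁅p, q⁆.2 = rho p.1 q.2 - rho q.1 p.2 + ⁅p.2, q.2⁆ := rfl

@[simp] lemma rho_add_apply (a b : AW k) (n : NW k) :
    rho (a + b) n = rho a n + rho b n := by
  rw [map_add]; rfl

@[simp] lemma rho_smul_apply (t : k) (a : AW k) (n : NW k) :
    rho (t • a) n = t • rho a n := by
  rw [map_smul]; rfl

lemma rho_lie_apply (a b : AW k) (n : NW k) :
    rho ⁅a, b⁆ n = rho a (rho b n) - rho b (rho a n) := by
  rw [LieHom.map_lie]; rfl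

instance sdLieRing : LieRing (SD k) where
  add_lie p q r := by
    refine Prod.ext ?_ ?_ <;>
      simp only [sd_bracket_fst, sd_bracket_snd, Prod.fst_add, Prod.snd_add,
        add_lie, lie_add, map_add, rho_add_apply, LieDerivation.add_apply] <;> abel
  lie_add p q r := by
    refine Prod.ext ?_ ?_ <;>
      simp only [sd_bracket_fst, sd_bracket_snd, Prod.fst_add, Prod.snd_add,
        add_lie, lie_add, map_add, rho_add_apply, LieDerivation.add_apply] <;> abel
  lie_self p := by
    refine Prod.ext ?_ ?_
    · simp
    · show rho p.1 p.2 - rho p.1 p.2 + ⁅p.2, p.2⁆ = (0 : NW k)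
      simp
  leibniz_lie p q r := by
    refine Prod.ext ?_ ?_
    · exact leibniz_lie p.1 q.1 r.1
    · show rho p.1 (rho q.1 r.2 - rho r.1 q.2 + ⁅q.2, r.2⁆)
          - rho ⁅q.1, r.1⁆ p.2
          + ⁅p.2, rho q.1 r.2 - rho r.1 q.2 + ⁅q.2, r.2⁆⁆
        = (rho ⁅p.1, q.1⁆ r.2
            - rho r.1 (rho p.1 q.2 - rho q.1 p.2 + ⁅p.2, q.2⁆)
            + ⁅rho p.1 q.2 - rho q.1 p.2 + ⁅p.2, q.2⁆, r.2⁆)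
          + (rho q.1 (rho p.1 r.2 - rho r.1 p.2 + ⁅p.2, r.2⁆)
            - rho ⁅p.1, r.1⁆ q.2
            + ⁅q.2, rho p.1 r.2 - rho r.1 p.2 + ⁅p.2, r.2⁆⁆)
      simp only [map_add, map_sub, rho_lie_apply, LieDerivation.apply_lie_eq_sub,
        lie_add, add_lie, lie_sub, sub_lie, lie_lie]
      rw [← lie_skew (rho p.1 q.2) r.2, ← lie_skew (rho q.1 p.2) r.2]
      abel

instance sdLieAlgebra : LieAlgebra k (SD k) where
  lie_smul t p q := by
    refine Prod.ext ?_ ?_ <;>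
      simp only [sd_bracket_fst, sd_bracket_snd, Prod.smul_fst, Prod.smul_snd,
        lie_smul, smul_add, smul_sub, map_smul, rho_smul_apply, LieDerivation.smul_apply]

end AuxStmt12

namespace AuxStmt12

variable {k}

def gen3 : Fin 3 → SD k :=
  ![((0 : AW k), of k ([] : List (Fin 2))), (of k (0 : Fin 2), 0), (of k (1 : Fin 2), 0)]

def psi : FreeLieAlgebra k (Fin 3) →ₗ⁅k⁆ SD k := lift k gen3

@[simp] lemma rho_of_apply (j : Fin 2) (w : List (Fin 2)) :
    rho (of k j) (of k w) = of k (j :: w) := by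
  simp [rho, lift_of_apply, dj]

@[simp] lemma rho_of_smul_of (j : Fin 2) (t : k) (w : List (Fin 2)) :
    rho (of k j) (t • of k w) = t • of k (j :: w) := by
  rw [map_smul, rho_of_apply]

def wrd (i : ℕ) : List (Fin 2) := (1 : Fin 2) :: List.replicate (i + 1) (0 : Fin 2)

lemma psi_abPow (n : ℕ) :
    psi (abPow k n) = ((0 : AW k),
      ((-1 : k) ^ n) • of k (List.replicate n (0 : Fin 2))) := by
  induction n with
  | zero =>
      rw [abPow]
      simp [psi, lift_of_apply, gen3]
  | succ n ih =>
      rw [abPow, LieHom.map_lie, ih]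
      have h2 : psi (of k (1 : Fin 3)) = (of k (0 : Fin 2), (0 : NW k)) := by
        simp [psi, lift_of_apply, gen3]
      rw [h2]
      refine Prod.ext ?_ ?_
      · simp
      · show rho (0 : AW k) (0 : NW k)
            - rho (of k (0 : Fin 2)) (((-1 : k) ^ n) • of k (List.replicate n (0 : Fin 2)))
            + ⁅_, (0 : NW k)⁆ = _
        rw [map_zero]
        simp only [LieDerivation.coe_zero, Pi.zero_apply, lie_zero, add_zero,
          rho_of_smul_of, zero_sub]
        rw [← List.replicate_succ]
        rw [show ((-1 : k) ^ (n + 1)) = -(-1 : k)^n by ring]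
        rw [neg_smul]

lemma psi_abc (i : ℕ) :
    psi (abc k i) = ((0 : AW k), ((-1 : k) ^ i) • of k (wrd i)) := by
  rw [abc, LieHom.map_lie, psi_abPow]
  have h2 : psi (of k (2 : Fin 3)) = (of k (1 : Fin 2), (0 : NW k)) := by
    simp [psi, lift_of_apply, gen3]
  rw [h2]
  refine Prod.ext ?_ ?_
  · simp
  · show rho (0 : AW k) (0 : NW k)
        - rho (of k (1 : Fin 2)) (((-1 : k) ^ (i + 1)) • of k (List.replicate (i + 1) (0 : Fin 2)))
        + ⁅_, (0 : NW k)⁆ = _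
    rw [map_zero]
    simp only [LieDerivation.coe_zero, Pi.zero_apply, lie_zero, add_zero,
      rho_of_smul_of, zero_sub]
    rw [show ((-1 : k) ^ (i + 1)) = -(-1 : k)^i by ring]
    rw [neg_smul, neg_neg]
    rfl

def G : FreeLieAlgebra k ℕ →ₗ⁅k⁆ NW k :=
  lift k (fun i => ((-1 : k) ^ i) • of k (wrd i))

def hfun : List (Fin 2) → FreeLieAlgebra k ℕ := fun w =>
  if w = wrd (w.length - 2) then ((-1 : k) ^ (w.length - 2)) • of k (w.length - 2) else 0

def H : NW k →ₗ⁅k⁆ FreeLieAlgebra k ℕ := lift k hfun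

lemma wrd_length (i : ℕ) : (wrd i).length = i + 2 := by
  simp [wrd]

lemma H_G : (H.comp G : FreeLieAlgebra k ℕ →ₗ⁅k⁆ FreeLieAlgebra k ℕ) = LieHom.id := by
  apply hom_ext
  intro i
  rw [LieHom.comp_apply, LieHom.id_apply, G, lift_of_apply, map_smul, H,
    lift_of_apply, hfun]
  rw [show (wrd i).length - 2 = i by simp [wrd_length]]
  rw [if_pos rfl, smul_smul, ← mul_pow]
  norm_num

lemma G_injective : Function.Injective (G : FreeLieAlgebra k ℕ →ₗ⁅k⁆ NW k) := by
  intro x y h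
  have hx := DFunLike.congr_fun (H_G (k := k)) x
  have hy := DFunLike.congr_fun (H_G (k := k)) y
  rw [LieHom.comp_apply] at hx hy
  rw [LieHom.id_apply] at hx hy
  rw [← hx, ← hy, h]

def jmap : NW k →ₗ⁅k⁆ SD k where
  toFun n := ((0 : AW k), n)
  map_add' m n := by refine Prod.ext ?_ ?_ <;> simp
  map_smul' t n := by refine Prod.ext ?_ ?_ <;> simp
  map_lie' {m n} := by
    refine Prod.ext ?_ ?_
    · simp
    · show ⁅m, n⁆ = rho (0 : AW k) n - rho (0 : AW k) m + ⁅m, n⁆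
      rw [map_zero]
      simp

end AuxStmt12

/-- In the free Lie algebra on `{a, b, c}` over a field `k`, the left-normed
elements `⟨a b^i c⟩`, `i = 1, 2, 3, ...`, freely generate a free Lie subalgebra:
the induced morphism from the free Lie algebra on countably many generators,
sending the `i`-th generator to `⟨a b^i c⟩`, is injective. -/
theorem stmt_12 :
    Function.Injective (FreeLieAlgebra.lift k (fun n : ℕ => abc k n)) := by
  intro x y h
  set F := FreeLieAlgebra.lift k (fun n : ℕ => abc k n) with hF
  have key : (AuxStmt12.psi.comp F : FreeLieAlgebra k ℕ →ₗ⁅k⁆ AuxStmt12.SD k)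
      = AuxStmt12.jmap.comp AuxStmt12.G := by
    apply hom_ext
    intro i
    rw [LieHom.comp_apply, LieHom.comp_apply, hF, lift_of_apply, AuxStmt12.psi_abc,
      AuxStmt12.G, lift_of_apply, map_smul]
    refine Prod.ext ?_ ?_
    · show (0 : AuxStmt12.AW k) = ((-1 : k) ^ i) • (0 : AuxStmt12.AW k)
      simp
    · rfl
  apply AuxStmt12.G_injective
  have h1 := DFunLike.congr_fun key x
  have h2 := DFunLike.congr_fun key y
  rw [LieHom.comp_apply] at h1 h2
  rw [LieHom.comp_apply] at h1 h2
  have : AuxStmt12.jmap (AuxStmt12.G x) = AuxStmt12.jmap (AuxStmt12.G y) := by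
    rw [← h1, ← h2, h]
  exact congrArg Prod.snd this
end
end
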